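/- arXiv:2504.00765 — 6 statements merged into one kernel-verified Lean document; each statement's English description precedes it below -/
import Mathlib

section
/- Let ρ, ρ̃ ∈ (0,1). On a probability space let η⁰, η, η̃⁰, η̃ : ℤ → {0,1} be random fields and let (N_k)_{k∈ℤ}, (Ñ_k)_{k∈ℤ} be square-integrable integer-valued random variables such that: (i) E[η(i)] = E[η⁰(i)] = ρ and E[η̃(i)] = E[η̃⁰(i)] = ρ̃ for all i ∈ ℤ; (ii) for every k ∈ ℤ the joint law of the shifted collection (η(·+k), η⁰(·+k), η̃(·+k), η̃⁰(·+k), (N_{j+k})_{j∈ℤ}, (Ñ_{j+k})_{j∈ℤ}) equals the joint law of the unshifted collection; (iii) almost surely N_k − N_{k−1} = η⁰(k) − η(k) and Ñ_k − Ñ_{k−1} = η̃⁰(k) − η̃(k) for all k ∈ ℤ. Define h(j) = 2N_0 + ∑_{i=1}^{j}(1−2η(i)) for j ≥ 1, h(0) = 2N_0, h(j) = 2N_0 − ∑_{i=j+1}^{0}(1−2η(i)) for j ≤ −1, and define h̃ analogously from Ñ_0 and η̃. Then for all integers x, x̃, i: (E[η(x+i)·η̃⁰(0)] − ρρ̃)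 + (E[η̃(x̃+i)·η⁰(0)] − ρρ̃) = (1/4)·(Δ_i Cov(h(x+i), h̃(x̃+i))), where Δ_i f(i) = f(i+1) − 2f(i) + f(i−1) is the discrete Laplacian in i. -/
open MeasureTheory

/-- The TASEP height function built from the current N₀ at the origin and the
occupation variables η: h(j) = 2N₀ + ∑_{i=1}^{j}(1−2η(i)) for j ≥ 1, h(0) = 2N₀,
h(j) = 2N₀ − ∑_{i=j+1}^{0}(1−2η(i)) for j ≤ −1. -/
noncomputable def heightFn {Ω : Type*} (N0 : Ω → ℝ) (η : ℤ → Ω → ℝ) (j : ℤ) (ω : Ω) : ℝ :=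
  if 1 ≤ j then 2 * N0 ω + ∑ i ∈ Finset.Icc 1 j, (1 - 2 * η i ω)
  else if j = 0 then 2 * N0 ω
  else 2 * N0 ω - ∑ i ∈ Finset.Icc (j + 1) 0, (1 - 2 * η i ω)

/-- The covariance Cov(X,Y) = E[XY] − E[X]E[Y]. -/
noncomputable def covFn {Ω : Type*} [MeasureSpace Ω] (X Y : Ω → ℝ) : ℝ :=
  (∫ ω, X ω * Y ω) - (∫ ω, X ω) * (∫ ω, Y ω)

/-- The tuple of all data shifted by k, used to express translation invariance of
the joint law. -/
def shiftTuple {Ω : Type*} (η η0 ηt ηt0 N Nt : ℤ → Ω → ℝ) (k : ℤ) (ω : Ω) :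
    (ℤ → ℝ) × (ℤ → ℝ) × (ℤ → ℝ) × (ℤ → ℝ) × (ℤ → ℝ) × (ℤ → ℝ) :=
  (fun i => η (i + k) ω, fun i => η0 (i + k) ω, fun i => ηt (i + k) ω,
   fun i => ηt0 (i + k) ω, fun j => N (j + k) ω, fun j => Nt (j + k) ω)

/-! ### Auxiliary definitions and lemmas -/

/-- Deterministic version of the height function, as a function of the value of the
current at the origin and of the occupation profile. -/
noncomputable def pureH (j : ℤ) (n0 : ℝ) (e : ℤ → ℝ) : ℝ :=
  if 1 ≤ j then 2 * n0 + ∑ i ∈ Finset.Icc 1 j, (1 - 2 * e i)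
  else if j = 0 then 2 * n0
  else 2 * n0 - ∑ i ∈ Finset.Icc (j + 1) 0, (1 - 2 * e i)

lemma pureH_eq {Ω : Type*} (N0 : Ω → ℝ) (e : ℤ → Ω → ℝ) (j : ℤ) (ω : Ω) :
    pureH j (N0 ω) (fun i => e i ω) = heightFn N0 e j ω := rfl

lemma measurable_pureH (j : ℤ) :
    Measurable (fun p : ℝ × (ℤ → ℝ) => pureH j p.1 p.2) := by
  by_cases h1 : 1 ≤ j
  · simp only [pureH, if_pos h1]
    exact (measurable_fst.const_mul 2).add
      (Finset.measurable_sum _ fun k _ =>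
        measurable_const.sub (((measurable_pi_apply k).comp measurable_snd).const_mul 2))
  · by_cases h2 : j = 0
    · simp only [pureH, if_neg h1, if_pos h2]
      exact measurable_fst.const_mul 2
    · simp only [pureH, if_neg h1, if_neg h2]
      exact (measurable_fst.const_mul 2).sub
        (Finset.measurable_sum _ fun k _ =>
          measurable_const.sub (((measurable_pi_apply k).comp measurable_snd).const_mul 2))

/-- The basic step identity h(j+1) = h(j) + (1 - 2 η(j+1)). -/
lemma heightFn_step {Ω : Type*} (N0 : Ω → ℝ) (e : ℤ → Ω → ℝ) (j : ℤ) (ω : Ω) :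
    heightFn N0 e (j + 1) ω = heightFn N0 e j ω + (1 - 2 * e (j + 1) ω) := by
  rcases lt_trichotomy j 0 with hj | rfl | hj
  · rcases eq_or_lt_of_le (by omega : j + 1 ≤ 0) with h0 | h0
    · simp only [heightFn, if_neg (by omega : ¬ (1:ℤ) ≤ j + 1), if_pos h0,
        if_neg (by omega : ¬ (1:ℤ) ≤ j), if_neg (by omega : j ≠ 0)]
      have hicc : Finset.Icc (j + 1) 0 = {(0:ℤ)} := by rw [h0]; exact Finset.Icc_self 0
      rw [hicc, Finset.sum_singleton, h0]
      ring
    · simp only [heightFn, if_neg (by omega : ¬ (1:ℤ) ≤ j + 1), if_neg (by omega : j + 1 ≠ 0),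
        if_neg (by omega : ¬ (1:ℤ) ≤ j), if_neg (by omega : j ≠ 0)]
      have hicc : Finset.Icc (j + 1) 0 = insert (j + 1) (Finset.Icc (j + 1 + 1) 0) := by
        ext y; simp only [Finset.mem_Icc, Finset.mem_insert]; omega
      rw [hicc, Finset.sum_insert (by simp only [Finset.mem_Icc]; omega)]
      ring
  · simp only [heightFn]
    norm_num
  · simp only [heightFn, if_pos (by omega : (1:ℤ) ≤ j + 1), if_pos (by omega : (1:ℤ) ≤ j)]
    have hicc : Finset.Icc (1:ℤ) (j + 1) = insert (j + 1) (Finset.Icc 1 j) := by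
      ext y; simp only [Finset.mem_Icc, Finset.mem_insert]; omega
    rw [hicc, Finset.sum_insert (by simp only [Finset.mem_Icc]; omega)]
    ring

/-- The height function built from the data shifted by one site, compared with the
original height function; uses the conservation law at the bond (0,1). -/
lemma heightFn_shift {Ω : Type*} (N0 N1 : Ω → ℝ) (e e0 : ℤ → Ω → ℝ) (ω : Ω)
    (hc : N1 ω - N0 ω = e0 1 ω - e 1 ω) (j : ℤ) :
    heightFn N1 (fun k => e (k + 1)) j ω = heightFn N0 e (j + 1) ω + 2 * e0 1 ω - 1 := by
  induction j using Int.induction_on with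
  | zero =>
    have h1 : heightFn N1 (fun k => e (k + 1)) 0 ω = 2 * N1 ω := by
      simp [heightFn]
    have h2 : heightFn N0 e (0 + 1) ω = 2 * N0 ω + (1 - 2 * e 1 ω) := by
      norm_num [heightFn]
    rw [h1, h2]; linarith
  | succ k ih =>
    have s1 : heightFn N1 (fun k => e (k + 1)) ((k : ℤ) + 1) ω
        = heightFn N1 (fun k => e (k + 1)) (k : ℤ) ω + (1 - 2 * e ((k : ℤ) + 1 + 1) ω) :=
      heightFn_step N1 (fun k => e (k + 1)) (k : ℤ) ω
    have s2 := heightFn_step N0 e ((k : ℤ) + 1) ω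
    rw [s1, ih, s2]
    ring
  | pred k ih =>
    have s1 : heightFn N1 (fun k => e (k + 1)) (-(k : ℤ)) ω
        = heightFn N1 (fun k => e (k + 1)) (-(k : ℤ) - 1) ω + (1 - 2 * e (-(k : ℤ) + 1) ω) := by
      have s0 : heightFn N1 (fun k => e (k + 1)) (-(k : ℤ) - 1 + 1) ω
          = heightFn N1 (fun k => e (k + 1)) (-(k : ℤ) - 1) ω
            + (1 - 2 * e (-(k : ℤ) - 1 + 1 + 1) ω) :=
        heightFn_step N1 (fun k => e (k + 1)) (-(k : ℤ) - 1) ω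
      rw [show (-(k : ℤ) - 1 + 1) = -(k : ℤ) from by ring] at s0
      exact s0
    have s2 := heightFn_step N0 e (-(k : ℤ)) ω
    have e1 : (-(k : ℤ) - 1 + 1) = -(k : ℤ) := by ring
    rw [e1]
    linarith [s1, s2, ih]

lemma memL2_of_bound {Ω : Type*} [MeasureSpace Ω] [IsProbabilityMeasure (volume : Measure Ω)]
    (f : Ω → ℝ) (hm : Measurable f) (C : ℝ) (hb : ∀ ω, |f ω| ≤ C) :
    MemLp f 2 (volume : Measure Ω) :=
  (memLp_top_of_bound hm.aestronglyMeasurable C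
    (Filter.Eventually.of_forall (by simpa [Real.norm_eq_abs] using hb))).mono_exponent
    le_top

lemma memL2_heightFn {Ω : Type*} [MeasureSpace Ω] [IsProbabilityMeasure (volume : Measure Ω)]
    (N0 : Ω → ℝ) (e : ℤ → Ω → ℝ) (j : ℤ)
    (hN2 : MemLp N0 2 (volume : Measure Ω)) (hNm : Measurable N0)
    (hem : ∀ k, Measurable (e k)) (heb : ∀ k ω, |e k ω| ≤ 1) :
    MemLp (heightFn N0 e j) 2 (volume : Measure Ω) := by
  have hsum : ∀ s : Finset ℤ, MemLp (fun ω => ∑ k ∈ s, (1 - 2 * e k ω)) 2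
      (volume : Measure Ω) := by
    intro s
    refine memL2_of_bound _
      (Finset.measurable_sum _ fun k _ => measurable_const.sub ((hem k).const_mul 2))
      (3 * s.card) ?_
    intro ω
    calc |∑ k ∈ s, (1 - 2 * e k ω)| ≤ ∑ k ∈ s, |1 - 2 * e k ω| :=
          Finset.abs_sum_le_sum_abs _ _
    _ ≤ ∑ k ∈ s, (3:ℝ) := by
        refine Finset.sum_le_sum fun k _ => ?_
        have := heb k ω
        rw [abs_le] at this ⊢
        constructor <;> linarith [this.1, this.2]
    _ = 3 * s.card := by rw [Finset.sum_const]; push_cast; ring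
  by_cases h1 : 1 ≤ j
  · have hfn : heightFn N0 e j = fun ω => 2 * N0 ω + ∑ k ∈ Finset.Icc 1 j, (1 - 2 * e k ω) :=
      funext fun ω => by simp only [heightFn, if_pos h1]
    rw [hfn]; exact (hN2.const_mul 2).add (hsum _)
  · by_cases h2 : j = 0
    · have hfn : heightFn N0 e j = fun ω => 2 * N0 ω :=
        funext fun ω => by simp only [heightFn, if_neg h1, if_pos h2]
      rw [hfn]; exact hN2.const_mul 2
    · have hfn : heightFn N0 e j
          = fun ω => 2 * N0 ω - ∑ k ∈ Finset.Icc (j + 1) 0, (1 - 2 * e k ω) :=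
        funext fun ω => by simp only [heightFn, if_neg h1, if_neg h2]
      rw [hfn]; exact (hN2.const_mul 2).sub (hsum _)

lemma integrable_L2_mul {Ω : Type*} [MeasureSpace Ω]
    (f g : Ω → ℝ) (hf : MemLp f 2 (volume : Measure Ω)) (hg : MemLp g 2 (volume : Measure Ω)) :
    Integrable (fun ω => f ω * g ω) (volume : Measure Ω) := by
  have h : (1 : ENNReal) / 1 = 1 / 2 + 1 / 2 := by rw [one_div_one, ENNReal.add_halves]
  haveI : ENNReal.HolderTriple 2 2 1 := ⟨by rw [inv_one, ENNReal.inv_two_add_inv_two]⟩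
  have h2 := memLp_one_iff_integrable.mp (hg.smul (r := 1) hf)
  simpa [Pi.smul_apply, smul_eq_mul, Pi.mul_def] using h2

lemma integral_affine {Ω : Type*} [MeasureSpace Ω] [IsProbabilityMeasure (volume : Measure Ω)]
    (u a : Ω → ℝ) (s : ℝ) (hu : Integrable u (volume : Measure Ω))
    (ha : Integrable a (volume : Measure Ω)) :
    ∫ ω, (u ω + s * (1 - 2 * a ω)) = (∫ ω, u ω) + s * (1 - 2 * ∫ ω, a ω) := by
  have J1 : Integrable (fun ω => (-(2 * s)) * a ω + s) (volume : Measure Ω) :=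
    (ha.const_mul _).add (integrable_const _)
  rw [show (fun ω => u ω + s * (1 - 2 * a ω))
      = fun ω => u ω + ((-(2 * s)) * a ω + s) from funext fun ω => by ring]
  rw [integral_add hu J1, integral_add (ha.const_mul _) (integrable_const _),
    integral_const_mul, integral_const]
  simp only [probReal_univ, smul_eq_mul, one_mul]
  ring

lemma integral_expand_prod {Ω : Type*} [MeasureSpace Ω]
    [IsProbabilityMeasure (volume : Measure Ω)]
    (u v a b : Ω → ℝ) (s : ℝ)
    (hu : Integrable u (volume : Measure Ω)) (hv : Integrable v (volume : Measure Ω))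
    (ha : Integrable a (volume : Measure Ω)) (hb : Integrable b (volume : Measure Ω))
    (huv : Integrable (fun ω => u ω * v ω) (volume : Measure Ω))
    (hub : Integrable (fun ω => u ω * b ω) (volume : Measure Ω))
    (hav : Integrable (fun ω => a ω * v ω) (volume : Measure Ω))
    (hab : Integrable (fun ω => a ω * b ω) (volume : Measure Ω)) :
    ∫ ω, (u ω + s * (1 - 2 * a ω)) * (v ω + s * (1 - 2 * b ω))
      = (∫ ω, u ω * v ω) + s * ((∫ ω, u ω) - 2 * ∫ ω, u ω * b ω)
        + s * ((∫ ω, v ω) - 2 * ∫ ω, a ω * v ω)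
        + s ^ 2 * (1 - 2 * (∫ ω, a ω) - 2 * (∫ ω, b ω) + 4 * ∫ ω, a ω * b ω) := by
  have I8 : Integrable (fun ω => (-2 * s ^ 2) * b ω + s ^ 2) (volume : Measure Ω) :=
    (hb.const_mul _).add (integrable_const _)
  have I7 : Integrable (fun ω => (-2 * s ^ 2) * a ω + ((-2 * s ^ 2) * b ω + s ^ 2))
      (volume : Measure Ω) := (ha.const_mul _).add I8
  have I6 : Integrable
      (fun ω => s * v ω + ((-2 * s ^ 2) * a ω + ((-2 * s ^ 2) * b ω + s ^ 2)))
      (volume : Measure Ω) := (hv.const_mul _).add I7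
  have I5 : Integrable
      (fun ω => s * u ω + (s * v ω + ((-2 * s ^ 2) * a ω + ((-2 * s ^ 2) * b ω + s ^ 2))))
      (volume : Measure Ω) := (hu.const_mul _).add I6
  have I4 : Integrable
      (fun ω => (4 * s ^ 2) * (a ω * b ω)
        + (s * u ω + (s * v ω + ((-2 * s ^ 2) * a ω + ((-2 * s ^ 2) * b ω + s ^ 2)))))
      (volume : Measure Ω) := (hab.const_mul _).add I5
  have I3 : Integrable
      (fun ω => (-2 * s) * (a ω * v ω) + ((4 * s ^ 2) * (a ω * b ω)
        + (s * u ω + (s * v ω + ((-2 * s ^ 2) * a ω + ((-2 * s ^ 2) * b ω + s ^ 2))))))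
      (volume : Measure Ω) := (hav.const_mul _).add I4
  have I2 : Integrable
      (fun ω => (-2 * s) * (u ω * b ω) + ((-2 * s) * (a ω * v ω) + ((4 * s ^ 2) * (a ω * b ω)
        + (s * u ω + (s * v ω + ((-2 * s ^ 2) * a ω + ((-2 * s ^ 2) * b ω + s ^ 2)))))))
      (volume : Measure Ω) := (hub.const_mul _).add I3
  rw [show (fun ω => (u ω + s * (1 - 2 * a ω)) * (v ω + s * (1 - 2 * b ω)))
      = fun ω => u ω * v ω + ((-2 * s) * (u ω * b ω) + ((-2 * s) * (a ω * v ω)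
        + ((4 * s ^ 2) * (a ω * b ω) + (s * u ω + (s * v ω
        + ((-2 * s ^ 2) * a ω + ((-2 * s ^ 2) * b ω + s ^ 2)))))))
      from funext fun ω => by ring]
  rw [integral_add huv I2, integral_add (hub.const_mul _) I3,
    integral_add (hav.const_mul _) I4, integral_add (hab.const_mul _) I5,
    integral_add (hu.const_mul _) I6, integral_add (hv.const_mul _) I7,
    integral_add (ha.const_mul _) I8, integral_add (hb.const_mul _) (integrable_const _),
    integral_const_mul, integral_const_mul, integral_const_mul, integral_const_mul,
    integral_const_mul, integral_const_mul, integral_const_mul, integral_const]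
  simp only [probReal_univ, smul_eq_mul, one_mul]
  ring

lemma covFn_expand {Ω : Type*} [MeasureSpace Ω] [IsProbabilityMeasure (volume : Measure Ω)]
    (u v a b : Ω → ℝ) (s : ℝ)
    (hu : Integrable u (volume : Measure Ω)) (hv : Integrable v (volume : Measure Ω))
    (ha : Integrable a (volume : Measure Ω)) (hb : Integrable b (volume : Measure Ω))
    (huv : Integrable (fun ω => u ω * v ω) (volume : Measure Ω))
    (hub : Integrable (fun ω => u ω * b ω) (volume : Measure Ω))
    (hav : Integrable (fun ω => a ω * v ω) (volume : Measure Ω))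
    (hab : Integrable (fun ω => a ω * b ω) (volume : Measure Ω)) :
    covFn (fun ω => u ω + s * (1 - 2 * a ω)) (fun ω => v ω + s * (1 - 2 * b ω))
      = (∫ ω, u ω * v ω) + s * ((∫ ω, u ω) - 2 * ∫ ω, u ω * b ω)
        + s * ((∫ ω, v ω) - 2 * ∫ ω, a ω * v ω)
        + s ^ 2 * (1 - 2 * (∫ ω, a ω) - 2 * (∫ ω, b ω) + 4 * ∫ ω, a ω * b ω)
        - ((∫ ω, u ω) + s * (1 - 2 * ∫ ω, a ω)) * ((∫ ω, v ω) + s * (1 - 2 * ∫ ω, b ω)) := by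
  simp only [covFn]
  rw [integral_expand_prod u v a b s hu hv ha hb huv hub hav hab,
    integral_affine u a s hu ha, integral_affine v b s hv hb]

/-- Formula for the sum of the off-diagonal two-point functions of the stationary
two-species (T)ASEP: S^#_{1,2}(x+i,t) + S^#_{2,1}(x̃+i,t̃)
= (1/4) Δᵢ Cov(h(x+i), h̃(x̃+i)). -/
theorem sum_mixed_correlations_formula
    {Ω : Type*} [MeasureSpace Ω] [IsProbabilityMeasure (volume : Measure Ω)]
    (ρ ρt : ℝ) (hρ : ρ ∈ Set.Ioo (0:ℝ) 1) (hρt : ρt ∈ Set.Ioo (0:ℝ) 1)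
    (η η0 ηt ηt0 N Nt : ℤ → Ω → ℝ)
    (hmeas : ∀ i : ℤ, Measurable (η i) ∧ Measurable (η0 i) ∧ Measurable (ηt i) ∧
      Measurable (ηt0 i) ∧ Measurable (N i) ∧ Measurable (Nt i))
    (hval : ∀ (i : ℤ) (ω : Ω), (η i ω = 0 ∨ η i ω = 1) ∧ (η0 i ω = 0 ∨ η0 i ω = 1) ∧
      (ηt i ω = 0 ∨ ηt i ω = 1) ∧ (ηt0 i ω = 0 ∨ ηt0 i ω = 1))
    (hNint : ∀ (k : ℤ) (ω : Ω), (∃ n : ℤ, N k ω = n) ∧ (∃ n : ℤ, Nt k ω = n))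
    (hNL2 : ∀ k : ℤ, MemLp (N k) 2 (volume : Measure Ω) ∧
      MemLp (Nt k) 2 (volume : Measure Ω))
    (hmean : ∀ i : ℤ, (∫ ω, η i ω = ρ) ∧ (∫ ω, η0 i ω = ρ) ∧
      (∫ ω, ηt i ω = ρt) ∧ (∫ ω, ηt0 i ω = ρt))
    (hshift : ∀ k : ℤ,
      Measure.map (shiftTuple η η0 ηt ηt0 N Nt k) (volume : Measure Ω)
        = Measure.map (shiftTuple η η0 ηt ηt0 N Nt 0) (volume : Measure Ω))
    (hcons : ∀ᵐ ω ∂(volume : Measure Ω), ∀ k : ℤ,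
      N k ω - N (k - 1) ω = η0 k ω - η k ω ∧
      Nt k ω - Nt (k - 1) ω = ηt0 k ω - ηt k ω) :
    ∀ x xt i : ℤ,
      ((∫ ω, η (x + i) ω * ηt0 0 ω) - ρ * ρt)
        + ((∫ ω, ηt (xt + i) ω * η0 0 ω) - ρ * ρt)
      = (1/4) * (covFn (heightFn (N 0) η (x + (i + 1))) (heightFn (Nt 0) ηt (xt + (i + 1)))
          - 2 * covFn (heightFn (N 0) η (x + i)) (heightFn (Nt 0) ηt (xt + i))
          + covFn (heightFn (N 0) η (x + (i - 1))) (heightFn (Nt 0) ηt (xt + (i - 1)))) := by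
  intro x xt i
  -- measurability of all the basic fields
  have hηm : ∀ k, Measurable (η k) := fun k => (hmeas k).1
  have hη0m : ∀ k, Measurable (η0 k) := fun k => (hmeas k).2.1
  have hηtm : ∀ k, Measurable (ηt k) := fun k => (hmeas k).2.2.1
  have hηt0m : ∀ k, Measurable (ηt0 k) := fun k => (hmeas k).2.2.2.1
  have hNm : ∀ k, Measurable (N k) := fun k => (hmeas k).2.2.2.2.1
  have hNtm : ∀ k, Measurable (Nt k) := fun k => (hmeas k).2.2.2.2.2
  -- boundedness of the occupation variables
  have hηb : ∀ k ω, |η k ω| ≤ 1 := fun k ω => by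
    rcases (hval k ω).1 with h | h <;> rw [h] <;> norm_num
  have hη0b : ∀ k ω, |η0 k ω| ≤ 1 := fun k ω => by
    rcases (hval k ω).2.1 with h | h <;> rw [h] <;> norm_num
  have hηtb : ∀ k ω, |ηt k ω| ≤ 1 := fun k ω => by
    rcases (hval k ω).2.2.1 with h | h <;> rw [h] <;> norm_num
  have hηt0b : ∀ k ω, |ηt0 k ω| ≤ 1 := fun k ω => by
    rcases (hval k ω).2.2.2 with h | h <;> rw [h] <;> norm_num
  -- L² facts
  have bmem : ∀ (f : Ω → ℝ), Measurable f → (∀ ω, |f ω| ≤ 1) →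
      MemLp f 2 (volume : Measure Ω) := fun f hm hb => memL2_of_bound f hm 1 hb
  have hu2 : MemLp (heightFn (N 0) η (x + i)) 2 (volume : Measure Ω) :=
    memL2_heightFn _ _ _ (hNL2 0).1 (hNm 0) hηm hηb
  have hu2' : MemLp (heightFn (N 0) η (x + i - 1)) 2 (volume : Measure Ω) :=
    memL2_heightFn _ _ _ (hNL2 0).1 (hNm 0) hηm hηb
  have hv2 : MemLp (heightFn (Nt 0) ηt (xt + i)) 2 (volume : Measure Ω) :=
    memL2_heightFn _ _ _ (hNL2 0).2 (hNtm 0) hηtm hηtb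
  have hv2' : MemLp (heightFn (Nt 0) ηt (xt + i - 1)) 2 (volume : Measure Ω) :=
    memL2_heightFn _ _ _ (hNL2 0).2 (hNtm 0) hηtm hηtb
  have hIu : Integrable (heightFn (N 0) η (x + i)) (volume : Measure Ω) :=
    hu2.integrable one_le_two
  have hIv : Integrable (heightFn (Nt 0) ηt (xt + i)) (volume : Measure Ω) :=
    hv2.integrable one_le_two
  have hIb1 : ∀ (f : Ω → ℝ), Measurable f → (∀ ω, |f ω| ≤ 1) →
      Integrable f (volume : Measure Ω) :=
    fun f hm hb => (bmem f hm hb).integrable one_le_two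
  -- integrable products
  have Iuv : Integrable (fun ω => heightFn (N 0) η (x + i) ω * heightFn (Nt 0) ηt (xt + i) ω)
      (volume : Measure Ω) := integrable_L2_mul _ _ hu2 hv2
  have Iub : Integrable (fun ω => heightFn (N 0) η (x + i) ω * ηt (xt + i + 1) ω)
      (volume : Measure Ω) := integrable_L2_mul _ _ hu2 (bmem _ (hηtm _) (hηtb _))
  have Iub' : Integrable (fun ω => heightFn (N 0) η (x + i) ω * ηt (xt + i) ω)
      (volume : Measure Ω) := integrable_L2_mul _ _ hu2 (bmem _ (hηtm _) (hηtb _))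
  have Ih'b' : Integrable (fun ω => heightFn (N 0) η (x + i - 1) ω * ηt (xt + i) ω)
      (volume : Measure Ω) := integrable_L2_mul _ _ hu2' (bmem _ (hηtm _) (hηtb _))
  have Iav : Integrable (fun ω => η (x + i + 1) ω * heightFn (Nt 0) ηt (xt + i) ω)
      (volume : Measure Ω) := integrable_L2_mul _ _ (bmem _ (hηm _) (hηb _)) hv2
  have Ia'v : Integrable (fun ω => η (x + i) ω * heightFn (Nt 0) ηt (xt + i) ω)
      (volume : Measure Ω) := integrable_L2_mul _ _ (bmem _ (hηm _) (hηb _)) hv2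
  have Ia'g' : Integrable (fun ω => η (x + i) ω * heightFn (Nt 0) ηt (xt + i - 1) ω)
      (volume : Measure Ω) := integrable_L2_mul _ _ (bmem _ (hηm _) (hηb _)) hv2'
  have Ibdd : ∀ (f g : Ω → ℝ), Measurable f → (∀ ω, |f ω| ≤ 1) → Measurable g →
      (∀ ω, |g ω| ≤ 1) → Integrable (fun ω => f ω * g ω) (volume : Measure Ω) :=
    fun f g hf hbf hg hbg => integrable_L2_mul _ _ (bmem f hf hbf) (bmem g hg hbg)
  have Iab : Integrable (fun ω => η (x + i + 1) ω * ηt (xt + i + 1) ω) (volume : Measure Ω) :=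
    Ibdd _ _ (hηm _) (hηb _) (hηtm _) (hηtb _)
  have Ia'b' : Integrable (fun ω => η (x + i) ω * ηt (xt + i) ω) (volume : Measure Ω) :=
    Ibdd _ _ (hηm _) (hηb _) (hηtm _) (hηtb _)
  have Ipb : Integrable (fun ω => ηt (xt + i + 1) ω * η0 1 ω) (volume : Measure Ω) :=
    Ibdd _ _ (hηtm _) (hηtb _) (hη0m _) (hη0b _)
  have Iaq : Integrable (fun ω => η (x + i + 1) ω * ηt0 1 ω) (volume : Measure Ω) :=
    Ibdd _ _ (hηm _) (hηb _) (hηt0m _) (hηt0b _)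
  have Ib : Integrable (ηt (xt + i + 1)) (volume : Measure Ω) := hIb1 _ (hηtm _) (hηtb _)
  have Ibp' : Integrable (ηt (xt + i)) (volume : Measure Ω) := hIb1 _ (hηtm _) (hηtb _)
  have Ia : Integrable (η (x + i + 1)) (volume : Measure Ω) := hIb1 _ (hηm _) (hηb _)
  have Ia' : Integrable (η (x + i)) (volume : Measure Ω) := hIb1 _ (hηm _) (hηb _)
  -- measurability of the shift tuple
  have hTmeas : ∀ k : ℤ, Measurable (shiftTuple η η0 ηt ηt0 N Nt k) := by
    intro k
    exact Measurable.prodMk (measurable_pi_lambda _ fun j => hηm _)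
      (Measurable.prodMk (measurable_pi_lambda _ fun j => hη0m _)
        (Measurable.prodMk (measurable_pi_lambda _ fun j => hηtm _)
          (Measurable.prodMk (measurable_pi_lambda _ fun j => hηt0m _)
            (Measurable.prodMk (measurable_pi_lambda _ fun j => hNm _)
              (measurable_pi_lambda _ fun j => hNtm _)))))
  -- transfer of expectations under the shift by 1
  have key : ∀ G : (ℤ → ℝ) × (ℤ → ℝ) × (ℤ → ℝ) × (ℤ → ℝ) × (ℤ → ℝ) × (ℤ → ℝ) → ℝ,
      Measurable G →
      (∫ ω, G (shiftTuple η η0 ηt ηt0 N Nt 1 ω)) = ∫ ω, G (shiftTuple η η0 ηt ηt0 N Nt 0 ω) := by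
    intro G hG
    rw [← integral_map (hTmeas 1).aemeasurable hG.aestronglyMeasurable, hshift 1,
      integral_map (hTmeas 0).aemeasurable hG.aestronglyMeasurable]
  -- projections measurability
  have m1 : Measurable (fun t : (ℤ → ℝ) × (ℤ → ℝ) × (ℤ → ℝ) × (ℤ → ℝ) × (ℤ → ℝ) × (ℤ → ℝ)
      => t.1) := measurable_fst
  have m2 : Measurable (fun t : (ℤ → ℝ) × (ℤ → ℝ) × (ℤ → ℝ) × (ℤ → ℝ) × (ℤ → ℝ) × (ℤ → ℝ)
      => t.2.1) := measurable_fst.comp measurable_snd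
  have m3 : Measurable (fun t : (ℤ → ℝ) × (ℤ → ℝ) × (ℤ → ℝ) × (ℤ → ℝ) × (ℤ → ℝ) × (ℤ → ℝ)
      => t.2.2.1) := measurable_fst.comp (measurable_snd.comp measurable_snd)
  have m4 : Measurable (fun t : (ℤ → ℝ) × (ℤ → ℝ) × (ℤ → ℝ) × (ℤ → ℝ) × (ℤ → ℝ) × (ℤ → ℝ)
      => t.2.2.2.1) := measurable_fst.comp (measurable_snd.comp
        (measurable_snd.comp measurable_snd))
  have m5 : Measurable (fun t : (ℤ → ℝ) × (ℤ → ℝ) × (ℤ → ℝ) × (ℤ → ℝ) × (ℤ → ℝ) × (ℤ → ℝ)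
      => t.2.2.2.2.1) := measurable_fst.comp (measurable_snd.comp
        (measurable_snd.comp (measurable_snd.comp measurable_snd)))
  have m6 : Measurable (fun t : (ℤ → ℝ) × (ℤ → ℝ) × (ℤ → ℝ) × (ℤ → ℝ) × (ℤ → ℝ) × (ℤ → ℝ)
      => t.2.2.2.2.2) := measurable_snd.comp (measurable_snd.comp
        (measurable_snd.comp (measurable_snd.comp measurable_snd)))
  -- shift identities
  have shA : (∫ ω, heightFn (N 1) (fun k => η (k + 1)) (x + i - 1) ω * ηt (xt + i + 1) ω)
      = ∫ ω, heightFn (N 0) η (x + i - 1) ω * ηt (xt + i) ω := by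
    have h := key (fun t => pureH (x + i - 1) (t.2.2.2.2.1 0) t.1 * t.2.2.1 (xt + i))
      (((measurable_pureH (x + i - 1)).comp
        (((measurable_pi_apply 0).comp m5).prodMk m1)).mul
        ((measurable_pi_apply (xt + i)).comp m3))
    simp only [shiftTuple, add_zero, zero_add] at h
    exact h
  have shC : (∫ ω, η (x + i + 1) ω * heightFn (Nt 1) (fun k => ηt (k + 1)) (xt + i - 1) ω)
      = ∫ ω, η (x + i) ω * heightFn (Nt 0) ηt (xt + i - 1) ω := by
    have h := key (fun t => t.1 (x + i) * pureH (xt + i - 1) (t.2.2.2.2.2 0) t.2.2.1)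
      (((measurable_pi_apply (x + i)).comp m1).mul
        ((measurable_pureH (xt + i - 1)).comp
          (((measurable_pi_apply 0).comp m6).prodMk m3)))
    simp only [shiftTuple, add_zero, zero_add] at h
    exact h
  have shE : (∫ ω, η (x + i + 1) ω * ηt (xt + i + 1) ω)
      = ∫ ω, η (x + i) ω * ηt (xt + i) ω := by
    have h := key (fun t => t.1 (x + i) * t.2.2.1 (xt + i))
      (((measurable_pi_apply (x + i)).comp m1).mul ((measurable_pi_apply (xt + i)).comp m3))
    simp only [shiftTuple, add_zero, zero_add] at h
    exact h
  have shF : (∫ ω, η (x + i + 1) ω * ηt0 1 ω) = ∫ ω, η (x + i) ω * ηt0 0 ω := by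
    have h := key (fun t => t.1 (x + i) * t.2.2.2.1 0)
      (((measurable_pi_apply (x + i)).comp m1).mul ((measurable_pi_apply 0).comp m4))
    simp only [shiftTuple, add_zero, zero_add] at h
    exact h
  have shG : (∫ ω, ηt (xt + i + 1) ω * η0 1 ω) = ∫ ω, ηt (xt + i) ω * η0 0 ω := by
    have h := key (fun t => t.2.2.1 (xt + i) * t.2.1 0)
      (((measurable_pi_apply (xt + i)).comp m3).mul ((measurable_pi_apply 0).comp m2))
    simp only [shiftTuple, add_zero, zero_add] at h
    exact h
  -- a.e. identities for the shifted height functions (conservation law)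
  have haeh : ∀ᵐ ω ∂(volume : Measure Ω),
      heightFn (N 1) (fun k => η (k + 1)) (x + i - 1) ω
        = heightFn (N 0) η (x + i) ω + 2 * η0 1 ω - 1 := by
    filter_upwards [hcons] with ω hc
    have h1 := (hc 1).1
    rw [show (1:ℤ) - 1 = 0 from by norm_num] at h1
    have h2 := heightFn_shift (N 0) (N 1) η η0 ω h1 (x + i - 1)
    rw [show x + i - 1 + 1 = x + i from by ring] at h2
    exact h2
  have haeg : ∀ᵐ ω ∂(volume : Measure Ω),
      heightFn (Nt 1) (fun k => ηt (k + 1)) (xt + i - 1) ω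
        = heightFn (Nt 0) ηt (xt + i) ω + 2 * ηt0 1 ω - 1 := by
    filter_upwards [hcons] with ω hc
    have h1 := (hc 1).2
    rw [show (1:ℤ) - 1 = 0 from by norm_num] at h1
    have h2 := heightFn_shift (Nt 0) (Nt 1) ηt ηt0 ω h1 (xt + i - 1)
    rw [show xt + i - 1 + 1 = xt + i from by ring] at h2
    exact h2
  -- pointwise step identities
  have hsplitu : ∀ ω, heightFn (N 0) η (x + i) ω
      = heightFn (N 0) η (x + i - 1) ω + (1 - 2 * η (x + i) ω) := fun ω => by
    have h := heightFn_step (N 0) η (x + i - 1) ω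
    rw [show x + i - 1 + 1 = x + i from by ring] at h
    exact h
  have hsplitv : ∀ ω, heightFn (Nt 0) ηt (xt + i) ω
      = heightFn (Nt 0) ηt (xt + i - 1) ω + (1 - 2 * ηt (xt + i) ω) := fun ω => by
    have h := heightFn_step (Nt 0) ηt (xt + i - 1) ω
    rw [show xt + i - 1 + 1 = xt + i from by ring] at h
    exact h
  -- main stationarity consequence 1:
  have hEub' : (∫ ω, heightFn (N 0) η (x + i) ω * ηt (xt + i) ω)
      = (∫ ω, heightFn (N 0) η (x + i) ω * ηt (xt + i + 1) ω)
        + 2 * (∫ ω, ηt (xt + i + 1) ω * η0 1 ω)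
        - 2 * (∫ ω, η (x + i) ω * ηt (xt + i) ω) := by
    have c1 : (∫ ω, heightFn (N 0) η (x + i) ω * ηt (xt + i) ω)
        = (∫ ω, heightFn (N 0) η (x + i - 1) ω * ηt (xt + i) ω)
          + (ρt - 2 * ∫ ω, η (x + i) ω * ηt (xt + i) ω) := by
      rw [show (fun ω => heightFn (N 0) η (x + i) ω * ηt (xt + i) ω)
          = fun ω => heightFn (N 0) η (x + i - 1) ω * ηt (xt + i) ω
            + (ηt (xt + i) ω + (-2) * (η (x + i) ω * ηt (xt + i) ω))
          from funext fun ω => by rw [hsplitu ω]; ring]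
      have J : Integrable (fun ω => ηt (xt + i) ω + (-2) * (η (x + i) ω * ηt (xt + i) ω))
          (volume : Measure Ω) := Ibp'.add (Ia'b'.const_mul _)
      rw [integral_add Ih'b' J,
        integral_add Ibp' (Ia'b'.const_mul _), integral_const_mul,
        (hmean (xt + i)).2.2.1]
      ring
    have c2 : (∫ ω, heightFn (N 0) η (x + i - 1) ω * ηt (xt + i) ω)
        = ∫ ω, heightFn (N 1) (fun k => η (k + 1)) (x + i - 1) ω * ηt (xt + i + 1) ω :=
      shA.symm
    have c3 : (∫ ω, heightFn (N 1) (fun k => η (k + 1)) (x + i - 1) ω * ηt (xt + i + 1) ω)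
        = ∫ ω, (heightFn (N 0) η (x + i) ω + 2 * η0 1 ω - 1) * ηt (xt + i + 1) ω :=
      integral_congr_ae (by filter_upwards [haeh] with ω h; rw [h])
    have c4 : (∫ ω, (heightFn (N 0) η (x + i) ω + 2 * η0 1 ω - 1) * ηt (xt + i + 1) ω)
        = (∫ ω, heightFn (N 0) η (x + i) ω * ηt (xt + i + 1) ω)
          + 2 * (∫ ω, ηt (xt + i + 1) ω * η0 1 ω) - ρt := by
      rw [show (fun ω => (heightFn (N 0) η (x + i) ω + 2 * η0 1 ω - 1) * ηt (xt + i + 1) ω)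
          = fun ω => heightFn (N 0) η (x + i) ω * ηt (xt + i + 1) ω
            + (2 * (ηt (xt + i + 1) ω * η0 1 ω) + (-1) * ηt (xt + i + 1) ω)
          from funext fun ω => by ring]
      have J : Integrable (fun ω => 2 * (ηt (xt + i + 1) ω * η0 1 ω)
          + (-1) * ηt (xt + i + 1) ω) (volume : Measure Ω) :=
        (Ipb.const_mul 2).add (Ib.const_mul (-1))
      rw [integral_add Iub J,
        integral_add (Ipb.const_mul 2) (Ib.const_mul (-1)), integral_const_mul,
        integral_const_mul, (hmean (xt + i + 1)).2.2.1]
      ring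
    rw [c1, c2, c3, c4]; ring
  -- main stationarity consequence 2:
  have hEa'v : (∫ ω, η (x + i) ω * heightFn (Nt 0) ηt (xt + i) ω)
      = (∫ ω, η (x + i + 1) ω * heightFn (Nt 0) ηt (xt + i) ω)
        + 2 * (∫ ω, η (x + i + 1) ω * ηt0 1 ω)
        - 2 * (∫ ω, η (x + i) ω * ηt (xt + i) ω) := by
    have c1 : (∫ ω, η (x + i) ω * heightFn (Nt 0) ηt (xt + i) ω)
        = (∫ ω, η (x + i) ω * heightFn (Nt 0) ηt (xt + i - 1) ω)
          + (ρ - 2 * ∫ ω, η (x + i) ω * ηt (xt + i) ω) := by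
      rw [show (fun ω => η (x + i) ω * heightFn (Nt 0) ηt (xt + i) ω)
          = fun ω => η (x + i) ω * heightFn (Nt 0) ηt (xt + i - 1) ω
            + (η (x + i) ω + (-2) * (η (x + i) ω * ηt (xt + i) ω))
          from funext fun ω => by rw [hsplitv ω]; ring]
      have J : Integrable (fun ω => η (x + i) ω + (-2) * (η (x + i) ω * ηt (xt + i) ω))
          (volume : Measure Ω) := Ia'.add (Ia'b'.const_mul _)
      rw [integral_add Ia'g' J,
        integral_add Ia' (Ia'b'.const_mul _), integral_const_mul, (hmean (x + i)).1]
      ring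
    have c2 : (∫ ω, η (x + i) ω * heightFn (Nt 0) ηt (xt + i - 1) ω)
        = ∫ ω, η (x + i + 1) ω * heightFn (Nt 1) (fun k => ηt (k + 1)) (xt + i - 1) ω :=
      shC.symm
    have c3 : (∫ ω, η (x + i + 1) ω * heightFn (Nt 1) (fun k => ηt (k + 1)) (xt + i - 1) ω)
        = ∫ ω, η (x + i + 1) ω * (heightFn (Nt 0) ηt (xt + i) ω + 2 * ηt0 1 ω - 1) :=
      integral_congr_ae (by filter_upwards [haeg] with ω h; rw [h])
    have c4 : (∫ ω, η (x + i + 1) ω * (heightFn (Nt 0) ηt (xt + i) ω + 2 * ηt0 1 ω - 1))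
        = (∫ ω, η (x + i + 1) ω * heightFn (Nt 0) ηt (xt + i) ω)
          + 2 * (∫ ω, η (x + i + 1) ω * ηt0 1 ω) - ρ := by
      rw [show (fun ω => η (x + i + 1) ω * (heightFn (Nt 0) ηt (xt + i) ω + 2 * ηt0 1 ω - 1))
          = fun ω => η (x + i + 1) ω * heightFn (Nt 0) ηt (xt + i) ω
            + (2 * (η (x + i + 1) ω * ηt0 1 ω) + (-1) * η (x + i + 1) ω)
          from funext fun ω => by ring]
      have J : Integrable (fun ω => 2 * (η (x + i + 1) ω * ηt0 1 ω)
          + (-1) * η (x + i + 1) ω) (volume : Measure Ω) :=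
        (Iaq.const_mul 2).add (Ia.const_mul (-1))
      rw [integral_add Iav J,
        integral_add (Iaq.const_mul 2) (Ia.const_mul (-1)), integral_const_mul,
        integral_const_mul, (hmean (x + i + 1)).1]
      ring
    rw [c1, c2, c3, c4]; ring
  -- rewrite the height functions at shifted points via the step identity
  have hup : heightFn (N 0) η (x + (i + 1))
      = fun ω => heightFn (N 0) η (x + i) ω + 1 * (1 - 2 * η (x + i + 1) ω) := by
    funext ω
    have h := heightFn_step (N 0) η (x + i) ω
    rw [show x + (i + 1) = x + i + 1 from by ring]
    rw [h]; ring
  have hvp : heightFn (Nt 0) ηt (xt + (i + 1))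
      = fun ω => heightFn (Nt 0) ηt (xt + i) ω + 1 * (1 - 2 * ηt (xt + i + 1) ω) := by
    funext ω
    have h := heightFn_step (Nt 0) ηt (xt + i) ω
    rw [show xt + (i + 1) = xt + i + 1 from by ring]
    rw [h]; ring
  have hum : heightFn (N 0) η (x + (i - 1))
      = fun ω => heightFn (N 0) η (x + i) ω + (-1) * (1 - 2 * η (x + i) ω) := by
    funext ω
    have h := hsplitu ω
    rw [show x + (i - 1) = x + i - 1 from by ring]
    rw [h]; ring
  have hvm : heightFn (Nt 0) ηt (xt + (i - 1))
      = fun ω => heightFn (Nt 0) ηt (xt + i) ω + (-1) * (1 - 2 * ηt (xt + i) ω) := by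
    funext ω
    have h := hsplitv ω
    rw [show xt + (i - 1) = xt + i - 1 from by ring]
    rw [h]; ring
  rw [hup, hvp, hum, hvm]
  rw [covFn_expand (heightFn (N 0) η (x + i)) (heightFn (Nt 0) ηt (xt + i))
    (η (x + i + 1)) (ηt (xt + i + 1)) 1 hIu hIv Ia Ib Iuv Iub Iav Iab]
  rw [covFn_expand (heightFn (N 0) η (x + i)) (heightFn (Nt 0) ηt (xt + i))
    (η (x + i)) (ηt (xt + i)) (-1) hIu hIv Ia' Ibp' Iuv Iub' Ia'v Ia'b']
  simp only [covFn]
  rw [(hmean (x + i + 1)).1, (hmean (x + i)).1, (hmean (xt + i + 1)).2.2.1,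
    (hmean (xt + i)).2.2.1]
  rw [← shF, ← shG, hEub', hEa'v, ← shE]
  ring
end

section
/- Let ρ1 ∈ (0,1) and ρ2 ∈ (0,1−ρ1), and set θ = log((ρ1(1−ρ1−ρ2)+ρ2)/(ρ1(1−ρ1−ρ2))). Then θ > 0, and for any two independent random variables Z and Y on a probability space with P(Z=1) = ρ1 = 1 − P(Z=0) and P(Y=1) = ρ1+ρ2 = 1 − P(Y=0), one has E[exp(θ·(Z−Y))] = 1; equivalently, ρ1(1−ρ1−ρ2)·e^θ + (1−ρ1)(ρ1+ρ2)·e^{−θ} + ρ1(ρ1+ρ2) + (1−ρ1)(1−ρ1−ρ2) = 1. -/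
open MeasureTheory ProbabilityTheory

/-- The Lundberg exponent θ = log((ρ1(1−ρ1−ρ2)+ρ2)/(ρ1(1−ρ1−ρ2))). -/
noncomputable def lundbergExponent (ρ1 ρ2 : ℝ) : ℝ :=
  Real.log ((ρ1*(1 - ρ1 - ρ2) + ρ2) / (ρ1*(1 - ρ1 - ρ2)))

/-- The Lundberg exponent is positive, the exponential moment of θ(Z−Y) equals 1
for independent Z ~ Ber(ρ1), Y ~ Ber(ρ1+ρ2), and the equivalent algebraic identity. -/
theorem lundberg_exponent_property
    (ρ1 ρ2 : ℝ) (h1 : ρ1 ∈ Set.Ioo (0:ℝ) 1) (h2 : ρ2 ∈ Set.Ioo (0:ℝ) (1 - ρ1)) :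
    0 < lundbergExponent ρ1 ρ2 ∧
    (∀ (Ω : Type) [MeasureSpace Ω] [IsProbabilityMeasure (volume : Measure Ω)]
      (Z Y : Ω → ℝ), Measurable Z → Measurable Y → IndepFun Z Y volume →
      volume {ω | Z ω = 1} = ENNReal.ofReal ρ1 →
      volume {ω | Z ω = 0} = ENNReal.ofReal (1 - ρ1) →
      volume {ω | Y ω = 1} = ENNReal.ofReal (ρ1 + ρ2) →
      volume {ω | Y ω = 0} = ENNReal.ofReal (1 - ρ1 - ρ2) →
      ∫ ω, Real.exp (lundbergExponent ρ1 ρ2 * (Z ω - Y ω)) = 1) ∧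
    ρ1*(1 - ρ1 - ρ2) * Real.exp (lundbergExponent ρ1 ρ2)
      + (1 - ρ1)*(ρ1 + ρ2) * Real.exp (-(lundbergExponent ρ1 ρ2))
      + ρ1*(ρ1 + ρ2) + (1 - ρ1)*(1 - ρ1 - ρ2) = 1 := by
  obtain ⟨h10, h11⟩ := h1
  obtain ⟨h20, h21⟩ := h2
  have ha : 0 < ρ1*(1-ρ1-ρ2) := by nlinarith
  have hb : 0 < ρ1*(1-ρ1-ρ2) + ρ2 := by linarith
  set θ := lundbergExponent ρ1 ρ2 with hθdef
  have hexp : Real.exp θ = (ρ1*(1-ρ1-ρ2)+ρ2)/(ρ1*(1-ρ1-ρ2)) :=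
    Real.exp_log (by positivity)
  have hexpneg : Real.exp (-θ) = (ρ1*(1-ρ1-ρ2))/(ρ1*(1-ρ1-ρ2)+ρ2) := by
    rw [Real.exp_neg, hexp, inv_div]
  have hθpos : 0 < θ := Real.log_pos ((one_lt_div ha).2 (by linarith))
  have halg : ρ1*(1 - ρ1 - ρ2) * Real.exp θ
      + (1 - ρ1)*(ρ1 + ρ2) * Real.exp (-θ)
      + ρ1*(ρ1 + ρ2) + (1 - ρ1)*(1 - ρ1 - ρ2) = 1 := by
    rw [hexp, hexpneg]
    field_simp
    ring
  refine ⟨hθpos, ?_, halg⟩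
  intro Ω _ _ Z Y hZ hY hind hZ1 hZ0 hY1 hY0
  have hAZ1 : {ω | Z ω = 1} = Z ⁻¹' {1} := rfl
  have hAZ0 : {ω | Z ω = 0} = Z ⁻¹' {0} := rfl
  have hAY1 : {ω | Y ω = 1} = Y ⁻¹' {1} := rfl
  have hAY0 : {ω | Y ω = 0} = Y ⁻¹' {0} := rfl
  rw [hAZ1] at hZ1; rw [hAZ0] at hZ0; rw [hAY1] at hY1; rw [hAY0] at hY0
  -- measurability of the four basic sets
  have mZ1 : MeasurableSet (Z ⁻¹' {1}) := hZ (measurableSet_singleton 1)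
  have mZ0 : MeasurableSet (Z ⁻¹' {0}) := hZ (measurableSet_singleton 0)
  have mY1 : MeasurableSet (Y ⁻¹' {1}) := hY (measurableSet_singleton 1)
  have mY0 : MeasurableSet (Y ⁻¹' {0}) := hY (measurableSet_singleton 0)
  -- the four intersections have product measures
  have hμ11 : volume (Z ⁻¹' {1} ∩ Y ⁻¹' {1}) = ENNReal.ofReal (ρ1 * (ρ1 + ρ2)) := by
    rw [hind.measure_inter_preimage_eq_mul _ _ (measurableSet_singleton 1)
      (measurableSet_singleton 1), hZ1, hY1, ← ENNReal.ofReal_mul h10.le]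
  have hμ10 : volume (Z ⁻¹' {1} ∩ Y ⁻¹' {0}) = ENNReal.ofReal (ρ1 * (1 - ρ1 - ρ2)) := by
    rw [hind.measure_inter_preimage_eq_mul _ _ (measurableSet_singleton 1)
      (measurableSet_singleton 0), hZ1, hY0, ← ENNReal.ofReal_mul h10.le]
  have hμ01 : volume (Z ⁻¹' {0} ∩ Y ⁻¹' {1}) = ENNReal.ofReal ((1 - ρ1) * (ρ1 + ρ2)) := by
    rw [hind.measure_inter_preimage_eq_mul _ _ (measurableSet_singleton 0)
      (measurableSet_singleton 1), hZ0, hY1, ← ENNReal.ofReal_mul (by linarith)]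
  have hμ00 : volume (Z ⁻¹' {0} ∩ Y ⁻¹' {0}) = ENNReal.ofReal ((1 - ρ1) * (1 - ρ1 - ρ2)) := by
    rw [hind.measure_inter_preimage_eq_mul _ _ (measurableSet_singleton 0)
      (measurableSet_singleton 0), hZ0, hY0, ← ENNReal.ofReal_mul (by linarith)]
  -- a.e. Z ∈ {0,1}
  have haeZ : ∀ᵐ ω, Z ω = 1 ∨ Z ω = 0 := by
    have hdisj : Disjoint (Z ⁻¹' {1}) (Z ⁻¹' {0}) := by
      rw [Set.disjoint_left]
      intro ω hω1 hω0
      simp only [Set.mem_preimage, Set.mem_singleton_iff] at hω1 hω0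
      rw [hω1] at hω0; exact one_ne_zero hω0
    have hu : volume (Z ⁻¹' {1} ∪ Z ⁻¹' {0}) = 1 := by
      rw [measure_union hdisj mZ0, hZ1, hZ0, ← ENNReal.ofReal_add h10.le (by linarith)]
      norm_num
    have hc : volume ((Z ⁻¹' {1} ∪ Z ⁻¹' {0})ᶜ) = 0 := by
      rw [measure_compl (mZ1.union mZ0) (measure_ne_top _ _), hu, measure_univ, tsub_self]
    filter_upwards [measure_eq_zero_iff_ae_notMem.mp hc] with ω hω
    simp only [Set.mem_compl_iff, Set.mem_union, Set.mem_preimage, Set.mem_singleton_iff] at hω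
    tauto
  have haeY : ∀ᵐ ω, Y ω = 1 ∨ Y ω = 0 := by
    have hdisj : Disjoint (Y ⁻¹' {1}) (Y ⁻¹' {0}) := by
      rw [Set.disjoint_left]
      intro ω hω1 hω0
      simp only [Set.mem_preimage, Set.mem_singleton_iff] at hω1 hω0
      rw [hω1] at hω0; exact one_ne_zero hω0
    have hu : volume (Y ⁻¹' {1} ∪ Y ⁻¹' {0}) = 1 := by
      rw [measure_union hdisj mY0, hY1, hY0, ← ENNReal.ofReal_add (by linarith) (by linarith)]
      norm_num
    have hc : volume ((Y ⁻¹' {1} ∪ Y ⁻¹' {0})ᶜ) = 0 := by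
      rw [measure_compl (mY1.union mY0) (measure_ne_top _ _), hu, measure_univ, tsub_self]
    filter_upwards [measure_eq_zero_iff_ae_notMem.mp hc] with ω hω
    simp only [Set.mem_compl_iff, Set.mem_union, Set.mem_preimage, Set.mem_singleton_iff] at hω
    tauto
  -- definition of the simple function
  set g : Ω → ℝ := fun ω =>
    (Z ⁻¹' {1} ∩ Y ⁻¹' {1}).indicator (fun _ => (1:ℝ)) ω
    + (Z ⁻¹' {1} ∩ Y ⁻¹' {0}).indicator (fun _ => Real.exp θ) ω
    + (Z ⁻¹' {0} ∩ Y ⁻¹' {1}).indicator (fun _ => Real.exp (-θ)) ω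
    + (Z ⁻¹' {0} ∩ Y ⁻¹' {0}).indicator (fun _ => (1:ℝ)) ω with hg
  have hae : (fun ω => Real.exp (θ * (Z ω - Y ω))) =ᵐ[volume] g := by
    filter_upwards [haeZ, haeY] with ω hωZ hωY
    rcases hωZ with hz | hz <;> rcases hωY with hy | hy <;>
      simp [hg, Set.indicator_apply, Set.mem_inter_iff, Set.mem_preimage, hz, hy]
  rw [integral_congr_ae hae]
  have int11 : Integrable ((Z ⁻¹' {1} ∩ Y ⁻¹' {1}).indicator (fun _ => (1:ℝ))) volume :=
    (integrable_const _).indicator (mZ1.inter mY1)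
  have int10 : Integrable ((Z ⁻¹' {1} ∩ Y ⁻¹' {0}).indicator (fun _ => Real.exp θ)) volume :=
    (integrable_const _).indicator (mZ1.inter mY0)
  have int01 : Integrable ((Z ⁻¹' {0} ∩ Y ⁻¹' {1}).indicator (fun _ => Real.exp (-θ))) volume :=
    (integrable_const _).indicator (mZ0.inter mY1)
  have int00 : Integrable ((Z ⁻¹' {0} ∩ Y ⁻¹' {0}).indicator (fun _ => (1:ℝ))) volume :=
    (integrable_const _).indicator (mZ0.inter mY0)
  have : ∫ ω, g ω = 1 * (volume (Z ⁻¹' {1} ∩ Y ⁻¹' {1})).toReal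
      + Real.exp θ * (volume (Z ⁻¹' {1} ∩ Y ⁻¹' {0})).toReal
      + Real.exp (-θ) * (volume (Z ⁻¹' {0} ∩ Y ⁻¹' {1})).toReal
      + 1 * (volume (Z ⁻¹' {0} ∩ Y ⁻¹' {0})).toReal := by
    simp only [hg]
    have i3 : Integrable (fun ω => (Z ⁻¹' {1} ∩ Y ⁻¹' {1}).indicator (fun _ => (1:ℝ)) ω
        + (Z ⁻¹' {1} ∩ Y ⁻¹' {0}).indicator (fun _ => Real.exp θ) ω
        + (Z ⁻¹' {0} ∩ Y ⁻¹' {1}).indicator (fun _ => Real.exp (-θ)) ω) volume :=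
      (int11.add int10).add int01
    have i2 : Integrable (fun ω => (Z ⁻¹' {1} ∩ Y ⁻¹' {1}).indicator (fun _ => (1:ℝ)) ω
        + (Z ⁻¹' {1} ∩ Y ⁻¹' {0}).indicator (fun _ => Real.exp θ) ω) volume :=
      int11.add int10
    rw [integral_add i3 int00, integral_add i2 int01, integral_add int11 int10,
      integral_indicator_const _ (mZ1.inter mY1), integral_indicator_const _ (mZ1.inter mY0),
      integral_indicator_const _ (mZ0.inter mY1), integral_indicator_const _ (mZ0.inter mY0)]
    simp only [smul_eq_mul]
    simp only [measureReal_def]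
    ring
  rw [this, hμ11, hμ10, hμ01, hμ00,
    ENNReal.toReal_ofReal (by positivity),
    ENNReal.toReal_ofReal (by positivity),
    ENNReal.toReal_ofReal (by nlinarith),
    ENNReal.toReal_ofReal (by nlinarith)]
  nlinarith [halg]
end

section
/- Let a, s : ℤ → {0,1} be sequences such that for every i ∈ ℤ the set {∑_{k=i}^{j}(a(k)−s(k)) : j ≥ i−1} (with the empty sum for j = i−1 equal to 0) is bounded above, define the queue length Q(i) as its supremum, and define the departure indicator d(i) = a(i) + Q(i+1) − Q(i). Then for every i ∈ ℤ: d(i) ∈ {0,1}, d(i) ≤ s(i), and d(i) = 1 if and only if s(i) = 1 and (a(i) = 1 or Q(i+1) ≥ 1). -/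
/-- The set of partial sums ∑_{k=i}^{j} (a(k) − s(k)) over j ≥ i−1
(with the empty sum for j = i−1 equal to 0). -/
def queueSet (a s : ℤ → ℤ) (i : ℤ) : Set ℤ :=
  {x | ∃ j : ℤ, i - 1 ≤ j ∧ x = ∑ k ∈ Finset.Icc i j, (a k - s k)}

/-- The queue length at site i: the supremum of the partial sums. -/
noncomputable def queueLen (a s : ℤ → ℤ) (i : ℤ) : ℤ := sSup (queueSet a s i)

/-- The departure indicator at site i. -/
noncomputable def departure (a s : ℤ → ℤ) (i : ℤ) : ℤ :=
  a i + queueLen a s (i + 1) - queueLen a s i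

lemma zero_mem_queueSet (a s : ℤ → ℤ) (i : ℤ) : (0 : ℤ) ∈ queueSet a s i :=
  ⟨i - 1, le_refl _, by
    rw [Finset.Icc_eq_empty (by omega : ¬ (i : ℤ) ≤ i - 1), Finset.sum_empty]⟩

lemma queueSet_nonempty (a s : ℤ → ℤ) (i : ℤ) : (queueSet a s i).Nonempty :=
  ⟨0, zero_mem_queueSet a s i⟩

lemma queueLen_nonneg (a s : ℤ → ℤ) (hbdd : ∀ i : ℤ, BddAbove (queueSet a s i)) (i : ℤ) :
    0 ≤ queueLen a s i :=
  le_csSup (hbdd i) (zero_mem_queueSet a s i)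

lemma Icc_split (i j : ℤ) (h : i ≤ j) :
    Finset.Icc i j = insert i (Finset.Icc (i + 1) j) := by
  ext x
  simp only [Finset.mem_Icc, Finset.mem_insert]
  omega

lemma queueLen_rec (a s : ℤ → ℤ) (hbdd : ∀ i : ℤ, BddAbove (queueSet a s i)) (i : ℤ) :
    queueLen a s i = max 0 (a i - s i + queueLen a s (i + 1)) := by
  apply le_antisymm
  · apply csSup_le (queueSet_nonempty a s i)
    rintro x ⟨j, hj, rfl⟩
    rcases eq_or_lt_of_le hj with hj' | hj'
    · rw [← hj', Finset.Icc_eq_empty (by omega : ¬ (i : ℤ) ≤ i - 1), Finset.sum_empty]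
      exact le_max_left _ _
    · have hij : i ≤ j := by omega
      rw [Icc_split i j hij, Finset.sum_insert (by simp)]
      have hmem : (∑ k ∈ Finset.Icc (i + 1) j, (a k - s k)) ∈ queueSet a s (i + 1) :=
        ⟨j, by omega, rfl⟩
      have : (∑ k ∈ Finset.Icc (i + 1) j, (a k - s k)) ≤ queueLen a s (i + 1) :=
        le_csSup (hbdd (i + 1)) hmem
      calc a i - s i + ∑ k ∈ Finset.Icc (i + 1) j, (a k - s k)
          ≤ a i - s i + queueLen a s (i + 1) := by omega
        _ ≤ max 0 (a i - s i + queueLen a s (i + 1)) := le_max_right _ _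
  · apply max_le
    · exact queueLen_nonneg a s hbdd i
    · have : queueLen a s (i + 1) ≤ queueLen a s i - (a i - s i) := by
        apply csSup_le (queueSet_nonempty a s (i + 1))
        rintro y ⟨j, hj, rfl⟩
        have hij : i ≤ j := by omega
        have hmem : (a i - s i + ∑ k ∈ Finset.Icc (i + 1) j, (a k - s k)) ∈ queueSet a s i :=
          ⟨j, by omega, by rw [Icc_split i j hij, Finset.sum_insert (by simp)]⟩
        have : (a i - s i + ∑ k ∈ Finset.Icc (i + 1) j, (a k - s k)) ≤ queueLen a s i :=
          le_csSup (hbdd i) hmem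
        omega
      omega

/-- The departure indicator takes values in {0,1}, is dominated by the service
indicator, and equals 1 precisely when there is a service and either an arrival
or a nonempty queue to the right. -/
theorem departure_characterisation (a s : ℤ → ℤ)
    (hval : ∀ k : ℤ, (a k = 0 ∨ a k = 1) ∧ (s k = 0 ∨ s k = 1))
    (hbdd : ∀ i : ℤ, BddAbove (queueSet a s i)) :
    ∀ i : ℤ, (departure a s i = 0 ∨ departure a s i = 1) ∧
      departure a s i ≤ s i ∧
      (departure a s i = 1 ↔ s i = 1 ∧ (a i = 1 ∨ 1 ≤ queueLen a s (i + 1))) := by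
  intro i
  obtain ⟨ha, hs⟩ := hval i
  have hQ' : 0 ≤ queueLen a s (i + 1) := queueLen_nonneg a s hbdd (i + 1)
  unfold departure
  rw [queueLen_rec a s hbdd i]
  rcases le_total (a i - s i + queueLen a s (i + 1)) 0 with h | h
  · rw [max_eq_left h]; omega
  · rw [max_eq_right h]; omega
end

section
/- Let a, s : ℤ → {0,1} be sequences such that for every i ∈ ℤ the set {∑_{k=i}^{j}(a(k)−s(k)) : j ≥ i−1} (with the empty sum for j = i−1 equal to 0) is bounded above, define the queue length Q(i) as its supremum, and define d(i) = a(i) + Q(i+1) − Q(i). For a sequence u : ℤ → {0,1}, define its height profile H_u : ℤ → ℤ by H_u(x) = x − 2∑_{k=1}^{x} u(k) for x ≥ 1, H_u(0) = 0, and H_u(x) = x + 2∑_{k=x+1}^{0} u(k) for x ≤ −1. Write ĥ = H_a, h̃ = H_s and h = H_d. Then for every x ∈ ℤ, the suprema sup_{j ≥ 0} {h̃(j) − ĥ(j)} and sup_{j ≥ x} {h̃(j) − h̃(x) − (ĥ(j) − ĥ(x))} are finite and h(x) = ĥ(x) + sup_{j ≥ 0} {h̃(j) − ĥ(j)} − sup_{j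 ≥ x} {h̃(j) − h̃(x) − (ĥ(j) − ĥ(x))}. -/
/-- The height profile associated with an occupation sequence u : ℤ → {0,1}. -/
noncomputable def heightProfile (u : ℤ → ℤ) (x : ℤ) : ℤ :=
  if 1 ≤ x then x - 2 * ∑ k ∈ Finset.Icc 1 x, u k
  else if x = 0 then 0
  else x + 2 * ∑ k ∈ Finset.Icc (x + 1) 0, u k

/-- Signed cumulative sum of `u` from `1` to `x`. -/
noncomputable def cumSum (u : ℤ → ℤ) (x : ℤ) : ℤ :=
  if 1 ≤ x then ∑ k ∈ Finset.Icc 1 x, u k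
  else if x = 0 then 0
  else -∑ k ∈ Finset.Icc (x + 1) 0, u k

lemma heightProfile_eq_cumSum (u : ℤ → ℤ) (x : ℤ) :
    heightProfile u x = x - 2 * cumSum u x := by
  unfold heightProfile cumSum
  split_ifs with h1 h2
  · ring
  · omega
  · ring

lemma sum_Icc_top (u : ℤ → ℤ) {i j : ℤ} (h : i ≤ j + 1) :
    ∑ k ∈ Finset.Icc i (j + 1), u k = ∑ k ∈ Finset.Icc i j, u k + u (j + 1) := by
  have hins : Finset.Icc i (j + 1) = insert (j + 1) (Finset.Icc i j) := by
    ext k; simp only [Finset.mem_Icc, Finset.mem_insert]; omega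
  rw [hins, Finset.sum_insert (by simp only [Finset.mem_Icc]; omega)]
  ring

lemma sum_Icc_bot (u : ℤ → ℤ) {i j : ℤ} (h : i ≤ j) :
    ∑ k ∈ Finset.Icc i j, u k = u i + ∑ k ∈ Finset.Icc (i + 1) j, u k := by
  have hins : Finset.Icc i j = insert i (Finset.Icc (i + 1) j) := by
    ext k; simp only [Finset.mem_Icc, Finset.mem_insert]; omega
  rw [hins, Finset.sum_insert (by simp only [Finset.mem_Icc]; omega)]

lemma cumSum_succ (u : ℤ → ℤ) (n : ℤ) :
    cumSum u (n + 1) = cumSum u n + u (n + 1) := by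
  rcases lt_trichotomy n (-1) with h | h | h
  · unfold cumSum
    rw [if_neg (show ¬(1:ℤ) ≤ n + 1 by omega), if_neg (show n + 1 ≠ 0 by omega),
      if_neg (show ¬(1:ℤ) ≤ n by omega), if_neg (show n ≠ 0 by omega),
      sum_Icc_bot u (show n + 1 ≤ 0 by omega)]
    ring
  · subst h
    norm_num [cumSum]
  · rcases lt_trichotomy n 0 with h' | h' | h'
    · omega
    · subst h'
      norm_num [cumSum]
    · unfold cumSum
      rw [if_pos (show (1:ℤ) ≤ n + 1 by omega), if_pos (show (1:ℤ) ≤ n by omega),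
        sum_Icc_top u (by omega)]

lemma cumSum_sub (u : ℤ → ℤ) {x j : ℤ} (h : x ≤ j) :
    cumSum u j = cumSum u x + ∑ k ∈ Finset.Icc (x + 1) j, u k := by
  refine Int.le_induction (motive := fun j _ => cumSum u j = cumSum u x + ∑ k ∈ Finset.Icc (x + 1) j, u k) ?_ ?_ j h
  · simp [Finset.Icc_eq_empty_of_lt (by omega : x + 1 > x)]
  · intro n hn ih
    rw [cumSum_succ, ih, sum_Icc_top u (by omega)]; ring

lemma cumSum_zero (u : ℤ → ℤ) : cumSum u 0 = 0 := by
  unfold cumSum; norm_num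

lemma heightProfile_zero (u : ℤ → ℤ) : heightProfile u 0 = 0 := by
  unfold heightProfile; norm_num

/-- The basic height-difference identity. -/
lemma height_diff (a s : ℤ → ℤ) {x j : ℤ} (h : x ≤ j) :
    heightProfile s j - heightProfile s x - (heightProfile a j - heightProfile a x)
      = 2 * ∑ k ∈ Finset.Icc (x + 1) j, (a k - s k) := by
  rw [heightProfile_eq_cumSum, heightProfile_eq_cumSum, heightProfile_eq_cumSum,
    heightProfile_eq_cumSum, cumSum_sub s h, cumSum_sub a h, Finset.sum_sub_distrib]
  ring

lemma queueLen_mem (a s : ℤ → ℤ) (hbdd : ∀ i : ℤ, BddAbove (queueSet a s i)) (i : ℤ) :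
    queueLen a s i ∈ queueSet a s i :=
  Int.csSup_mem ⟨0, zero_mem_queueSet a s i⟩ (hbdd i)

lemma le_queueLen (a s : ℤ → ℤ) (hbdd : ∀ i : ℤ, BddAbove (queueSet a s i))
    {i z : ℤ} (hz : z ∈ queueSet a s i) : z ≤ queueLen a s i :=
  le_csSup (hbdd i) hz

/-- The variational set at `x` is `2 •` the queue set at `x+1`, with sup `2 Q(x+1)`. -/
lemma key (a s : ℤ → ℤ) (hbdd : ∀ i : ℤ, BddAbove (queueSet a s i)) (x : ℤ) :
    BddAbove {y : ℤ | ∃ j : ℤ, x ≤ j ∧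
      y = heightProfile s j - heightProfile s x - (heightProfile a j - heightProfile a x)} ∧
    sSup {y : ℤ | ∃ j : ℤ, x ≤ j ∧
      y = heightProfile s j - heightProfile s x - (heightProfile a j - heightProfile a x)}
      = 2 * queueLen a s (x + 1) := by
  set A := {y : ℤ | ∃ j : ℤ, x ≤ j ∧
      y = heightProfile s j - heightProfile s x - (heightProfile a j - heightProfile a x)}
  have hub : ∀ y ∈ A, y ≤ 2 * queueLen a s (x + 1) := by
    rintro y ⟨j, hj, rfl⟩
    rw [height_diff a s hj]
    have : (∑ k ∈ Finset.Icc (x + 1) j, (a k - s k)) ∈ queueSet a s (x + 1) :=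
      ⟨j, by omega, rfl⟩
    have := le_queueLen a s hbdd this
    omega
  have hmem : 2 * queueLen a s (x + 1) ∈ A := by
    obtain ⟨j, hj, hQ⟩ := queueLen_mem a s hbdd (x + 1)
    exact ⟨j, by omega, by rw [height_diff a s (by omega : x ≤ j), ← hQ]⟩
  refine ⟨⟨2 * queueLen a s (x + 1), hub⟩, le_antisymm ?_ ?_⟩
  · exact csSup_le ⟨_, hmem⟩ hub
  · exact le_csSup ⟨2 * queueLen a s (x + 1), hub⟩ hmem

lemma setB_eq (a s : ℤ → ℤ) :
    {y : ℤ | ∃ j : ℤ, 0 ≤ j ∧ y = heightProfile s j - heightProfile a j}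
      = {y : ℤ | ∃ j : ℤ, (0:ℤ) ≤ j ∧
          y = heightProfile s j - heightProfile s 0 - (heightProfile a j - heightProfile a 0)} := by
  ext y
  simp only [Set.mem_setOf_eq, heightProfile_zero]
  constructor <;> rintro ⟨j, hj, rfl⟩ <;> exact ⟨j, hj, by ring⟩

lemma cumSum_departure (a s : ℤ → ℤ) (x : ℤ) :
    cumSum (departure a s) x = cumSum a x + queueLen a s (x + 1) - queueLen a s 1 := by
  induction x using Int.induction_on with
  | zero => rw [cumSum_zero, cumSum_zero]; ring
  | succ n ih =>
      rw [cumSum_succ, cumSum_succ, ih, departure]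
      ring
  | pred n ih =>
      have h1 : cumSum (departure a s) (-(n:ℤ) - 1 + 1) = cumSum (departure a s) (-(n:ℤ) - 1) + departure a s (-(n:ℤ) - 1 + 1) := cumSum_succ _ _
      have h2 : cumSum a (-(n:ℤ) - 1 + 1) = cumSum a (-(n:ℤ) - 1) + a (-(n:ℤ) - 1 + 1) := cumSum_succ _ _
      have h3 : (-(n:ℤ) - 1 + 1) = -(n:ℤ) := by ring
      rw [h3] at h1 h2
      rw [departure] at h1
      rw [show -(n:ℤ) - 1 + 1 = -(n:ℤ) by ring]
      omega

/-- Lemma 5.3 of the paper: the height profile of the departure process is given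
by a variational formula in terms of the height profiles of the arrival and
service processes. -/
theorem departure_height_profile_formula (a s : ℤ → ℤ)
    (hval : ∀ k : ℤ, (a k = 0 ∨ a k = 1) ∧ (s k = 0 ∨ s k = 1))
    (hbdd : ∀ i : ℤ, BddAbove (queueSet a s i)) :
    ∀ x : ℤ,
      BddAbove {y : ℤ | ∃ j : ℤ, 0 ≤ j ∧ y = heightProfile s j - heightProfile a j} ∧
      BddAbove {y : ℤ | ∃ j : ℤ, x ≤ j ∧
        y = heightProfile s j - heightProfile s x - (heightProfile a j - heightProfile a x)} ∧
      heightProfile (departure a s) x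
        = heightProfile a x
          + sSup {y : ℤ | ∃ j : ℤ, 0 ≤ j ∧ y = heightProfile s j - heightProfile a j}
          - sSup {y : ℤ | ∃ j : ℤ, x ≤ j ∧
              y = heightProfile s j - heightProfile s x
                - (heightProfile a j - heightProfile a x)} := by
  intro x
  obtain ⟨hB1, hB2⟩ := key a s hbdd 0
  obtain ⟨hA1, hA2⟩ := key a s hbdd x
  rw [setB_eq a s]
  refine ⟨hB1, hA1, ?_⟩
  rw [hB2, hA2, heightProfile_eq_cumSum, heightProfile_eq_cumSum, cumSum_departure]
  norm_num
  ring
end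

section
/- Fix ρ1 ∈ (0,1) and ρ2 ∈ (0,1−ρ1). On a probability space, let (a(k))_{k∈ℤ} and (s(k))_{k∈ℤ} be a mutually independent family of {0,1}-valued random variables with P(a(k)=1) = ρ1 and P(s(k)=1) = ρ1+ρ2 for all k. Then for all integers j ≤ i: P( for all n < j, ∑_{k=n}^{i} a(k) ≥ ∑_{k=n}^{j} s(k) ) = 0. -/
open MeasureTheory ProbabilityTheory Filter Topology
open scoped Classical

section Aux

variable {Ω : Type*} [MeasureSpace Ω] [IsProbabilityMeasure (volume : Measure Ω)]

/-- For a {0,1}-valued measurable function, the measure of any preimage is determined by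
the measure of `{f = 1}`. -/
lemma bern_preimage_measure (f : Ω → ℝ) (hf : Measurable f)
    (hv : ∀ ω, f ω = 0 ∨ f ω = 1) (t : Set ℝ) :
    volume (f ⁻¹' t) = (if (0:ℝ) ∈ t then 1 - volume {ω | f ω = 1} else 0)
      + (if (1:ℝ) ∈ t then volume {ω | f ω = 1} else 0) := by
  have hm1 : MeasurableSet {ω | f ω = 1} := hf (measurableSet_singleton 1)
  have hc : {ω | f ω = 1}ᶜ = {ω | f ω = 0} := by
    ext ω; rcases hv ω with h | h <;> simp [h]
  have h0 : volume {ω | f ω = 0} = 1 - volume {ω | f ω = 1} := by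
    rw [← hc, measure_compl hm1 (measure_ne_top _ _), measure_univ]
  by_cases h0t : (0:ℝ) ∈ t <;> by_cases h1t : (1:ℝ) ∈ t
  · have : f ⁻¹' t = Set.univ := by
      ext ω; rcases hv ω with h | h <;> simp [h, h0t, h1t]
    have hle : volume {ω | f ω = 1} ≤ 1 := prob_le_one
    simp [this, h0t, h1t, tsub_add_cancel_of_le hle]
  · have : f ⁻¹' t = {ω | f ω = 0} := by
      ext ω; rcases hv ω with h | h <;> simp [h, h0t, h1t]
    simp [this, h0t, h1t, h0]
  · have : f ⁻¹' t = {ω | f ω = 1} := by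
      ext ω; rcases hv ω with h | h <;> simp [h, h0t, h1t]
    simp [this, h0t, h1t]
  · have : f ⁻¹' t = ∅ := by
      ext ω; rcases hv ω with h | h <;> simp [h, h0t, h1t]
    simp [this, h0t, h1t]

lemma bern_map_eq (f g : Ω → ℝ) (hf : Measurable f) (hg : Measurable g)
    (hvf : ∀ ω, f ω = 0 ∨ f ω = 1) (hvg : ∀ ω, g ω = 0 ∨ g ω = 1)
    (hp : volume {ω | f ω = 1} = volume {ω | g ω = 1}) :
    Measure.map f (volume : Measure Ω) = Measure.map g volume := by
  refine Measure.ext fun t ht => ?_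
  rw [Measure.map_apply hf ht, Measure.map_apply hg ht,
    bern_preimage_measure f hf hvf t, bern_preimage_measure g hg hvg t, hp]

lemma bern_eq_indicator (f : Ω → ℝ) (hv : ∀ ω, f ω = 0 ∨ f ω = 1) :
    f = Set.indicator {ω | f ω = 1} (fun _ => (1:ℝ)) := by
  funext ω
  rcases hv ω with h | h
  · rw [h, Set.indicator_of_notMem]
    simp [h]
  · rw [h, Set.indicator_of_mem]
    exact h

lemma bern_integrable (f : Ω → ℝ) (hf : Measurable f) (hv : ∀ ω, f ω = 0 ∨ f ω = 1) :
    Integrable f (volume : Measure Ω) := by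
  rw [bern_eq_indicator f hv]
  exact (integrable_const (1:ℝ)).indicator (hf (measurableSet_singleton 1))

lemma bern_integral (f : Ω → ℝ) (hf : Measurable f) (hv : ∀ ω, f ω = 0 ∨ f ω = 1)
    (p : ℝ) (hp0 : 0 ≤ p) (hp : volume {ω | f ω = 1} = ENNReal.ofReal p) :
    ∫ ω, f ω = p := by
  have hm1 : MeasurableSet {ω | f ω = 1} := hf (measurableSet_singleton 1)
  conv_lhs => rw [show (fun ω => f ω) = f from rfl, bern_eq_indicator f hv]
  rw [integral_indicator_const (1:ℝ) hm1, measureReal_def, hp, ENNReal.toReal_ofReal hp0]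
  simp

end Aux

/-- In the queueing construction of the stationary measure of the two-species TASEP
with independent Bernoulli arrival (rate ρ1) and service (rate ρ1+ρ2) processes, for
all j ≤ i, the event that the arrival at i is matched to the service at j with all
earlier services to the left already used has probability zero. -/
theorem matching_event_null
    {Ω : Type*} [MeasureSpace Ω] [IsProbabilityMeasure (volume : Measure Ω)]
    (ρ1 ρ2 : ℝ) (h1 : ρ1 ∈ Set.Ioo (0:ℝ) 1) (h2 : ρ2 ∈ Set.Ioo (0:ℝ) (1 - ρ1))
    (a s : ℤ → Ω → ℝ)
    (hma : ∀ k, Measurable (a k)) (hms : ∀ k, Measurable (s k))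
    (hva : ∀ k ω, a k ω = 0 ∨ a k ω = 1) (hvs : ∀ k ω, s k ω = 0 ∨ s k ω = 1)
    (hindep : iIndepFun (m := fun _ : ℤ ⊕ ℤ => (inferInstance : MeasurableSpace ℝ))
      (Sum.elim a s) volume)
    (hpa : ∀ k, volume {ω | a k ω = 1} = ENNReal.ofReal ρ1)
    (hps : ∀ k, volume {ω | s k ω = 1} = ENNReal.ofReal (ρ1 + ρ2)) :
    ∀ i j : ℤ, j ≤ i →
      volume {ω | ∀ n : ℤ, n < j →
        ∑ k ∈ Finset.Icc n j, s k ω ≤ ∑ k ∈ Finset.Icc n i, a k ω} = 0 := by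
  intro i j hji
  have hmes : ∀ c : ℤ ⊕ ℤ, Measurable (Sum.elim a s c) := by
    rintro (k | k)
    · exact hma k
    · exact hms k
  -- the difference sequence
  set X : ℕ → Ω → ℝ := fun m ω => s (j - 1 - m) ω - a (j - 1 - m) ω with hX
  -- pairwise independence
  have hpair : Pairwise (Function.onFun (IndepFun · · (volume : Measure Ω)) X) := by
    intro m m' hmm'
    have hkk' : (j - 1 - (m:ℤ)) ≠ (j - 1 - (m':ℤ)) := by
      intro h; apply hmm'; omega
    have h := hindep.indepFun_prodMk_prodMk hmes
      (Sum.inl (j - 1 - (m:ℤ))) (Sum.inr (j - 1 - (m:ℤ)))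
      (Sum.inl (j - 1 - (m':ℤ))) (Sum.inr (j - 1 - (m':ℤ)))
      (by simp [hkk']) (by simp) (by simp) (by simp [hkk'])
    exact h.comp (measurable_snd.sub measurable_fst) (measurable_snd.sub measurable_fst)
  -- identical distribution
  have hident : ∀ m, IdentDistrib (X m) (X 0) volume volume := by
    have hpairdist : ∀ k k' : ℤ,
        Measure.map (fun ω => (a k ω, s k ω)) (volume : Measure Ω)
          = Measure.map (fun ω => (a k' ω, s k' ω)) volume := by
      intro k k'
      have hind : ∀ l : ℤ, IndepFun (a l) (s l) (volume : Measure Ω) := by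
        intro l
        exact hindep.indepFun (show (Sum.inl l : ℤ ⊕ ℤ) ≠ Sum.inr l by simp)
      have e1 := (indepFun_iff_map_prod_eq_prod_map_map
        (hma k).aemeasurable (hms k).aemeasurable).mp (hind k)
      have e2 := (indepFun_iff_map_prod_eq_prod_map_map
        (hma k').aemeasurable (hms k').aemeasurable).mp (hind k')
      rw [e1, e2,
        bern_map_eq (a k) (a k') (hma k) (hma k') (hva k) (hva k') (by rw [hpa, hpa]),
        bern_map_eq (s k) (s k') (hms k) (hms k') (hvs k) (hvs k') (by rw [hps, hps])]
    intro m
    have hpd : IdentDistrib (fun ω => (a (j-1-(m:ℤ)) ω, s (j-1-(m:ℤ)) ω))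
        (fun ω => (a (j-1-(0:ℕ):ℤ) ω, s (j-1-(0:ℕ):ℤ) ω)) volume volume :=
      ⟨((hma _).prodMk (hms _)).aemeasurable, ((hma _).prodMk (hms _)).aemeasurable,
        hpairdist _ _⟩
    exact hpd.comp (measurable_snd.sub measurable_fst)
  -- integrability
  have hint : Integrable (X 0) (volume : Measure Ω) :=
    (bern_integrable _ (hms _) (hvs _)).sub (bern_integrable _ (hma _) (hva _))
  -- expectation
  have hexp : ∫ ω, X 0 ω = ρ2 := by
    rw [hX]
    simp only
    rw [integral_sub (bern_integrable _ (hms _) (hvs _)) (bern_integrable _ (hma _) (hva _)),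
      bern_integral _ (hms _) (hvs _) (ρ1 + ρ2) (by linarith [h1.1, h2.1]) (hps _),
      bern_integral _ (hma _) (hva _) ρ1 (le_of_lt h1.1) (hpa _)]
    ring
  -- strong law
  have hslln := strong_law_ae X hint hpair hident
  rw [hexp] at hslln
  -- the event implies partial sums of X are bounded by C
  set C : ℝ := ((i : ℝ) - (j : ℝ) + 1) with hC
  have hsubset : {ω | ∀ n : ℤ, n < j →
        ∑ k ∈ Finset.Icc n j, s k ω ≤ ∑ k ∈ Finset.Icc n i, a k ω}
      ⊆ {ω | ¬ Tendsto (fun n : ℕ => (n : ℝ)⁻¹ • ∑ m ∈ Finset.range n, X m ω)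
          atTop (𝓝 ρ2)} := by
    intro ω hω hT
    simp only [Set.mem_setOf_eq] at hω
    -- partial sums are bounded by C
    have hbound : ∀ n : ℕ, 1 ≤ n → ∑ m ∈ Finset.range n, X m ω ≤ C := by
      intro n hn
      -- reindex
      have hre : ∑ m ∈ Finset.range n, X m ω
          = ∑ k ∈ Finset.Icc (j - n) (j - 1), (s k ω - a k ω) := by
        refine Finset.sum_bij' (fun m _ => j - 1 - (m : ℤ))
          (fun k _ => (j - 1 - k).toNat) ?_ ?_ ?_ ?_ ?_
        · intro m hm
          simp only [Finset.mem_range] at hm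
          simp only [Finset.mem_Icc]
          omega
        · intro k hk
          simp only [Finset.mem_Icc] at hk
          simp only [Finset.mem_range]
          omega
        · intro m hm
          simp only [Finset.mem_range] at hm
          show (j - 1 - (j - 1 - (m:ℤ))).toNat = m
          omega
        · intro k hk
          simp only [Finset.mem_Icc] at hk
          show j - 1 - (((j - 1 - k).toNat : ℕ) : ℤ) = k
          omega
        · intro m hm; rfl
      have hlt : j - (n : ℤ) < j := by omega
      have hev := hω (j - n) hlt
      -- split the a-sum
      have hsplit : Finset.Icc (j - (n:ℤ)) i
          = Finset.Icc (j - (n:ℤ)) (j - 1) ∪ Finset.Icc j i := by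
        ext k; simp only [Finset.mem_union, Finset.mem_Icc]; omega
      have hdisj : Disjoint (Finset.Icc (j - (n:ℤ)) (j - 1)) (Finset.Icc j i) := by
        rw [Finset.disjoint_left]
        intro k hk hk'
        simp only [Finset.mem_Icc] at hk hk'
        omega
      have hasum : ∑ k ∈ Finset.Icc (j - (n:ℤ)) i, a k ω
          = ∑ k ∈ Finset.Icc (j - (n:ℤ)) (j - 1), a k ω + ∑ k ∈ Finset.Icc j i, a k ω := by
        rw [hsplit, Finset.sum_union hdisj]
      -- s-sum over Icc (j-n) (j-1) ≤ s-sum over Icc (j-n) j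
      have hssub : ∑ k ∈ Finset.Icc (j - (n:ℤ)) (j - 1), s k ω
          ≤ ∑ k ∈ Finset.Icc (j - (n:ℤ)) j, s k ω := by
        refine Finset.sum_le_sum_of_subset_of_nonneg ?_ ?_
        · intro k hk
          simp only [Finset.mem_Icc] at hk ⊢
          omega
        · intro k _ _
          rcases hvs k ω with h | h <;> simp [h]
      -- a-sum over Icc j i ≤ C
      have hasmall : ∑ k ∈ Finset.Icc j i, a k ω ≤ C := by
        have h1' : ∑ k ∈ Finset.Icc j i, a k ω ≤ (Finset.Icc j i).card • (1:ℝ) := by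
          refine Finset.sum_le_card_nsmul _ _ _ ?_
          intro k _
          rcases hva k ω with h | h <;> simp [h]
        have hcard : ((Finset.Icc j i).card : ℝ) = C := by
          rw [Int.card_Icc, hC]
          have h' : ((i + 1 - j).toNat : ℤ) = (i + 1 - j) := Int.toNat_of_nonneg (by omega)
          have h'' : (((i + 1 - j).toNat : ℕ) : ℝ) = ((i + 1 - j : ℤ) : ℝ) := by
            exact_mod_cast h'
          rw [h'']; push_cast; ring
        calc ∑ k ∈ Finset.Icc j i, a k ω ≤ (Finset.Icc j i).card • (1:ℝ) := h1'
          _ = C := by rw [nsmul_eq_mul, mul_one, hcard]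
      have habound : ∑ k ∈ Finset.Icc (j - (n:ℤ)) (j - 1), (s k ω - a k ω) ≤ C := by
        rw [Finset.sum_sub_distrib]
        have := hasum ▸ hev
        have h3 : ∑ k ∈ Finset.Icc (j - (n:ℤ)) (j - 1), s k ω
            ≤ ∑ k ∈ Finset.Icc (j - (n:ℤ)) (j - 1), a k ω + ∑ k ∈ Finset.Icc j i, a k ω :=
          le_trans hssub this
        linarith [hasmall]
      rw [hre]
      exact habound
    -- deduce ρ2 ≤ 0
    have h2pos : (0:ℝ) < ρ2 := h2.1
    have hle : ρ2 ≤ 0 := by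
      have hCdiv : Tendsto (fun n : ℕ => C / n) atTop (𝓝 0) :=
        tendsto_const_div_atTop_nhds_zero_nat C
      refine le_of_tendsto_of_tendsto hT hCdiv ?_
      filter_upwards [eventually_ge_atTop 1] with n hn
      have hnpos : (0:ℝ) < n := by exact_mod_cast hn
      calc (n:ℝ)⁻¹ • ∑ m ∈ Finset.range n, X m ω
          = (n:ℝ)⁻¹ * ∑ m ∈ Finset.range n, X m ω := by rw [smul_eq_mul]
        _ ≤ (n:ℝ)⁻¹ * C :=
            mul_le_mul_of_nonneg_left (hbound n hn) (inv_nonneg.mpr hnpos.le)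
        _ = C / n := inv_mul_eq_div _ _
    linarith
  refine measure_mono_null hsubset ?_
  have := hslln
  rw [ae_iff] at this
  exact this
end

section
/- Fix ρ1 ∈ (0,1) and ρ2 ∈ (0,1−ρ1). On a probability space, let (a(k))_{k∈ℤ} and (s(k))_{k∈ℤ} be a mutually independent family of {0,1}-valued random variables with P(a(k)=1) = ρ1 and P(s(k)=1) = ρ1+ρ2 for all k. Then there exist constants C, c > 0, depending only on ρ1 and ρ2, such that for every pair of integers u ≤ v with ℓ = v − u: P( there exists i with u ≤ i ≤ v such that site i carries a second class particle ) ≥ 1 − C·e^{−c·ℓ}. -/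
open MeasureTheory ProbabilityTheory

/-- Site i carries a second class particle in the queueing construction:
there is a service but no arrival at i, and the queue to the right of i is empty. -/
def SecondClassAt {Ω : Type*} (a s : ℤ → Ω → ℝ) (i : ℤ) (ω : Ω) : Prop :=
  s i ω = 1 ∧ a i ω = 0 ∧ ∀ j : ℤ, i + 1 ≤ j →
    ∑ k ∈ Finset.Icc (i + 1) j, a k ω ≤ ∑ k ∈ Finset.Icc (i + 1) j, s k ω

private lemma sum_Icc_split (g : ℤ → ℤ) (u i j : ℤ) (hi : u - 1 ≤ i) (hij : i ≤ j) :
    ∑ k ∈ Finset.Icc u j, g k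
      = (∑ k ∈ Finset.Icc u i, g k) + ∑ k ∈ Finset.Icc (i + 1) j, g k := by
  have hd : Disjoint (Finset.Icc u i) (Finset.Icc (i + 1) j) := by
    rw [Finset.disjoint_left]
    intro k hk hk'
    simp only [Finset.mem_Icc] at hk hk'
    omega
  rw [← Finset.sum_union hd]
  congr 1
  ext k
  simp only [Finset.mem_union, Finset.mem_Icc]
  omega

private lemma key_combinatorial (g : ℤ → ℤ) (hgl : ∀ k, -1 ≤ g k) (u v : ℤ) (huv : u ≤ v)
    (H : ∀ j, v ≤ j → ∑ k ∈ Finset.Icc u j, g k < 0) :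
    ∃ i, u ≤ i ∧ i ≤ v ∧ g i = -1 ∧
      ∀ j, i + 1 ≤ j → ∑ k ∈ Finset.Icc (i + 1) j, g k ≤ 0 := by
  classical
  set T : ℤ → ℤ := fun j => ∑ k ∈ Finset.Icc u j, g k with hT
  have hTdef : ∀ j, T j = ∑ k ∈ Finset.Icc u j, g k := fun j => rfl
  have hT0 : T (u - 1) = 0 := by
    rw [hTdef, Finset.Icc_eq_empty_of_lt (by omega : u - 1 < u), Finset.sum_empty]
  set D : Finset ℤ := Finset.Icc (u - 1) (v - 1) with hD
  have hDne : D.Nonempty := ⟨u - 1, by simp only [hD, Finset.mem_Icc]; omega⟩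
  obtain ⟨b, hbD, hbmax⟩ := D.exists_max_image T hDne
  set A : Finset ℤ := D.filter (fun i => T b ≤ T i) with hA
  have hAne : A.Nonempty := ⟨b, by simp [hA, hbD]⟩
  set i0 : ℤ := A.max' hAne with hi0
  have hi0A : i0 ∈ A := A.max'_mem hAne
  have hi0D : i0 ∈ D := (Finset.mem_filter.mp hi0A).1
  have hi0max : ∀ j ∈ D, T j ≤ T i0 :=
    fun j hj => (hbmax j hj).trans (Finset.mem_filter.mp hi0A).2
  have hlast : ∀ j ∈ D, i0 < j → T j < T i0 := by
    intro j hj hlt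
    by_contra hcon
    push_neg at hcon
    have hjA : j ∈ A := Finset.mem_filter.mpr ⟨hj, (Finset.mem_filter.mp hi0A).2.trans hcon⟩
    have := A.le_max' j hjA
    omega
  have hi0mem : u - 1 ≤ i0 ∧ i0 ≤ v - 1 := Finset.mem_Icc.mp (hD ▸ hi0D)
  have hT0le : 0 ≤ T i0 := by
    have := hi0max (u - 1) (by simp only [hD, Finset.mem_Icc]; omega)
    omega
  have hafter : ∀ j, i0 < j → T j ≤ T i0 - 1 := by
    intro j hj
    rcases le_or_gt j (v - 1) with h | h
    · have hjD : j ∈ D := by simp only [hD, Finset.mem_Icc]; omega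
      have := hlast j hjD hj
      omega
    · have := H j (by omega)
      rw [← hTdef] at this
      omega
  have hstep : T (i0 + 1) = T i0 + g (i0 + 1) := by
    rw [hTdef, hTdef, sum_Icc_split g u i0 (i0 + 1) hi0mem.1 (by omega)]
    rw [Finset.Icc_self, Finset.sum_singleton]
  have hg1 : g (i0 + 1) = -1 := by
    have h1 := hafter (i0 + 1) (by omega)
    have h2 := hgl (i0 + 1)
    omega
  refine ⟨i0 + 1, by omega, by omega, hg1, ?_⟩
  intro j hj
  have h1 : T j = T (i0 + 1) + ∑ k ∈ Finset.Icc (i0 + 1 + 1) j, g k := by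
    rw [hTdef, hTdef, sum_Icc_split g u (i0 + 1) j (by omega) (by omega)]
  have h2 := hafter j (by omega)
  omega

private lemma exists_second_class {Ω : Type*} (a s : ℤ → Ω → ℝ)
    (hva : ∀ k ω, a k ω = 0 ∨ a k ω = 1) (hvs : ∀ k ω, s k ω = 0 ∨ s k ω = 1)
    (u v : ℤ) (huv : u ≤ v) (ω : Ω)
    (H : ∀ j : ℤ, v ≤ j → ∑ k ∈ Finset.Icc u j, a k ω < ∑ k ∈ Finset.Icc u j, s k ω) :
    ∃ i : ℤ, u ≤ i ∧ i ≤ v ∧ SecondClassAt a s i ω := by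
  classical
  set g : ℤ → ℤ :=
    fun k => (if a k ω = 1 then 1 else 0) - (if s k ω = 1 then 1 else 0) with hg
  have hcast : ∀ p q : ℤ, ((∑ k ∈ Finset.Icc p q, g k : ℤ) : ℝ)
      = ∑ k ∈ Finset.Icc p q, a k ω - ∑ k ∈ Finset.Icc p q, s k ω := by
    intro p q
    rw [← Finset.sum_sub_distrib]
    push_cast
    refine Finset.sum_congr rfl fun k _ => ?_
    rcases hva k ω with h | h <;> rcases hvs k ω with h' | h' <;>
      simp [hg, h, h']
  have hgl : ∀ k, -1 ≤ g k := by
    intro k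
    simp only [hg]
    split <;> split <;> omega
  have H' : ∀ j, v ≤ j → ∑ k ∈ Finset.Icc u j, g k < 0 := by
    intro j hj
    have h1 := H j hj
    have h2 : ((∑ k ∈ Finset.Icc u j, g k : ℤ) : ℝ) < 0 := by
      rw [hcast]; linarith
    exact_mod_cast h2
  obtain ⟨i, hiu, hiv, hgi, hq⟩ := key_combinatorial g hgl u v huv H'
  have hai : a i ω = 0 ∧ s i ω = 1 := by
    rcases hva i ω with h | h <;> rcases hvs i ω with h' | h' <;>
      simp [hg, h, h'] at hgi <;> exact ⟨h, h'⟩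
  refine ⟨i, hiu, hiv, hai.2, hai.1, ?_⟩
  intro j hj
  have h1 := hq j hj
  have h2 : ((∑ k ∈ Finset.Icc (i + 1) j, g k : ℤ) : ℝ) ≤ 0 := by exact_mod_cast h1
  rw [hcast] at h2
  linarith

private lemma mgf_bernoulli {Ω : Type*} [MeasureSpace Ω]
    [IsProbabilityMeasure (volume : Measure Ω)]
    {X : Ω → ℝ} (hm : Measurable X) (hv : ∀ ω, X ω = 0 ∨ X ω = 1) {p : ℝ} (hp : 0 ≤ p)
    (hP : volume {ω | X ω = 1} = ENNReal.ofReal p) (t : ℝ) :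
    mgf X volume t = 1 + (Real.exp t - 1) * p := by
  classical
  have hset : MeasurableSet {ω | X ω = 1} := hm (measurableSet_singleton 1)
  have hind : X = Set.indicator {ω | X ω = 1} (fun _ => (1 : ℝ)) := by
    funext ω
    rcases hv ω with h | h <;> simp [Set.indicator_apply, h]
  have hintX : Integrable X volume := by
    rw [hind]; exact (integrable_const 1).indicator hset
  have hiX : ∫ ω, X ω = p := by
    conv_lhs => rw [hind]
    rw [MeasureTheory.integral_indicator_const _ hset]
    simp [measureReal_def, hP, ENNReal.toReal_ofReal hp]
  have heq : (fun ω => Real.exp (t * X ω)) = fun ω => 1 + (Real.exp t - 1) * X ω := by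
    funext ω
    rcases hv ω with h | h
    · rw [h]; norm_num
    · rw [h]; rw [mul_one, mul_one]; ring
  simp only [mgf]
  rw [heq, integral_add (integrable_const 1) (hintX.const_mul _),
    MeasureTheory.integral_const_mul, hiX]
  simp

private lemma chernoff_step {Ω : Type*} [MeasureSpace Ω]
    [IsProbabilityMeasure (volume : Measure Ω)]
    (ρ1 ρ2 : ℝ) (hρ1 : 0 ≤ ρ1) (hρs : 0 ≤ ρ1 + ρ2) {t : ℝ} (ht : 0 < t)
    (a s : ℤ → Ω → ℝ)
    (hma : ∀ k, Measurable (a k)) (hms : ∀ k, Measurable (s k))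
    (hva : ∀ k ω, a k ω = 0 ∨ a k ω = 1) (hvs : ∀ k ω, s k ω = 0 ∨ s k ω = 1)
    (hindep : iIndepFun
      (Sum.elim a s) volume)
    (hpa : ∀ k, volume {ω | a k ω = 1} = ENNReal.ofReal ρ1)
    (hps : ∀ k, volume {ω | s k ω = 1} = ENNReal.ofReal (ρ1 + ρ2))
    (u j : ℤ) :
    volume {ω | ∑ k ∈ Finset.Icc u j, s k ω ≤ ∑ k ∈ Finset.Icc u j, a k ω}
      ≤ ENNReal.ofReal
        (((1 + (Real.exp t - 1) * ρ1) * (1 + (Real.exp (-t) - 1) * (ρ1 + ρ2)))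
          ^ (Finset.Icc u j).card) := by
  classical
  set F : Finset ℤ := Finset.Icc u j with hF
  set Z : ℤ ⊕ ℤ → Ω → ℝ := Sum.elim a (fun k => -(s k)) with hZdef
  have hZmeas : ∀ m, Measurable (Z m) := by
    rintro (k | k)
    · exact hma k
    · exact (hms k).neg
  have hZindep : iIndepFun Z volume := by
    have hcomp : Z = fun m =>
        (Sum.elim (fun _ : ℤ => (id : ℝ → ℝ)) (fun _ : ℤ => (fun x : ℝ => -x)) m)
          ∘ (Sum.elim a s m) := by
      funext m ω; cases m <;> rfl
    rw [hcomp]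
    exact hindep.comp _ (by rintro (k | k); exacts [measurable_id, measurable_neg])
  set W : Ω → ℝ := fun ω => ∑ m ∈ F.disjSum F, Z m ω with hW
  have hWapp : ∀ ω, W ω = (∑ k ∈ F, a k ω) - ∑ k ∈ F, s k ω := by
    intro ω
    simp only [hW, Finset.sum_disjSum, hZdef, Sum.elim_inl, Sum.elim_inr, Pi.neg_apply,
      Finset.sum_neg_distrib, sub_eq_add_neg]
  have hWmeas : Measurable W := Finset.measurable_sum _ fun m _ => hZmeas m
  have hsum_eq : (∑ m ∈ F.disjSum F, Z m) = W := by
    funext ω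
    rw [Finset.sum_apply]
  have hma' : ∀ k ∈ F, mgf (Z (Sum.inl k)) volume t = 1 + (Real.exp t - 1) * ρ1 :=
    fun k _ => mgf_bernoulli (hma k) (hva k) hρ1 (hpa k) t
  have hms' : ∀ k ∈ F, mgf (Z (Sum.inr k)) volume t
      = 1 + (Real.exp (-t) - 1) * (ρ1 + ρ2) := by
    intro k _
    have hzz : Z (Sum.inr k) = -(s k) := rfl
    rw [hzz, mgf_neg, mgf_bernoulli (hms k) (hvs k) hρs (hps k) (-t)]
  have hmgf : mgf W volume t
      = ((1 + (Real.exp t - 1) * ρ1) * (1 + (Real.exp (-t) - 1) * (ρ1 + ρ2))) ^ F.card := by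
    rw [← hsum_eq, hZindep.mgf_sum hZmeas, Finset.prod_disjSum,
      Finset.prod_congr rfl hma', Finset.prod_congr rfl hms',
      Finset.prod_const, Finset.prod_const, ← mul_pow]
  have hintW : Integrable (fun ω => Real.exp (t * W ω)) volume := by
    have hb : ∀ ω, ‖Real.exp (t * W ω)‖ ≤ Real.exp (t * F.card) := by
      intro ω
      rw [Real.norm_eq_abs, abs_of_pos (Real.exp_pos _)]
      apply Real.exp_le_exp.mpr
      apply mul_le_mul_of_nonneg_left _ ht.le
      rw [hWapp ω]
      have h1 : ∑ k ∈ F, a k ω ≤ (F.card : ℝ) := by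
        calc ∑ k ∈ F, a k ω ≤ ∑ _k ∈ F, (1 : ℝ) :=
              Finset.sum_le_sum fun k _ => by rcases hva k ω with h | h <;> simp [h]
          _ = F.card := by simp
      have h2 : (0 : ℝ) ≤ ∑ k ∈ F, s k ω :=
        Finset.sum_nonneg fun k _ => by rcases hvs k ω with h | h <;> simp [h]
      linarith
    exact (integrable_const _).mono'
      ((hWmeas.const_mul t).exp.aestronglyMeasurable) (Filter.Eventually.of_forall hb)
  have hMarkov := measure_ge_le_exp_mul_mgf (μ := volume) (X := W) 0 ht.le hintW
  simp only [mul_zero, neg_zero, Real.exp_zero, one_mul] at hMarkov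
  have hev : {ω | ∑ k ∈ F, s k ω ≤ ∑ k ∈ F, a k ω} = {ω | (0 : ℝ) ≤ W ω} := by
    ext ω
    rw [Set.mem_setOf_eq, Set.mem_setOf_eq, hWapp ω, sub_nonneg]
  rw [hev]
  have hfin : volume {ω | (0 : ℝ) ≤ W ω} ≠ ⊤ := measure_ne_top _ _
  rw [← ENNReal.ofReal_toReal hfin]
  exact ENNReal.ofReal_le_ofReal (hMarkov.trans (le_of_eq hmgf))

/-- In every interval [u,v] of length ℓ = v−u there is a second class particle
with probability at least 1 − C e^{−cℓ}. -/
theorem second_class_particle_in_interval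
    {Ω : Type*} [MeasureSpace Ω] [IsProbabilityMeasure (volume : Measure Ω)]
    (ρ1 ρ2 : ℝ) (h1 : ρ1 ∈ Set.Ioo (0:ℝ) 1) (h2 : ρ2 ∈ Set.Ioo (0:ℝ) (1 - ρ1))
    (a s : ℤ → Ω → ℝ)
    (hma : ∀ k, Measurable (a k)) (hms : ∀ k, Measurable (s k))
    (hva : ∀ k ω, a k ω = 0 ∨ a k ω = 1) (hvs : ∀ k ω, s k ω = 0 ∨ s k ω = 1)
    (hindep : iIndepFun
      (Sum.elim a s) volume)
    (hpa : ∀ k, volume {ω | a k ω = 1} = ENNReal.ofReal ρ1)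
    (hps : ∀ k, volume {ω | s k ω = 1} = ENNReal.ofReal (ρ1 + ρ2)) :
    ∃ C > (0:ℝ), ∃ c > (0:ℝ), ∀ u v : ℤ, u ≤ v →
      1 - ENNReal.ofReal (C * Real.exp (-c * ((v - u : ℤ) : ℝ)))
        ≤ volume {ω | ∃ i : ℤ, u ≤ i ∧ i ≤ v ∧ SecondClassAt a s i ω} := by
  obtain ⟨hρ1pos, hρ1lt⟩ := h1
  obtain ⟨hρ2pos, hρ2lt⟩ := h2
  set φ : ℝ → ℝ :=
    fun x => (1 + (Real.exp x - 1) * ρ1) * (1 + (Real.exp (-x) - 1) * (ρ1 + ρ2)) with hφ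
  have hderiv : HasDerivAt φ (-ρ2) 0 := by
    have ha' : HasDerivAt (fun x : ℝ => 1 + (Real.exp x - 1) * ρ1) (Real.exp 0 * ρ1) 0 := by
      simpa using (((Real.hasDerivAt_exp 0).sub_const 1).mul_const ρ1).const_add 1
    have hb' : HasDerivAt (fun x : ℝ => 1 + (Real.exp (-x) - 1) * (ρ1 + ρ2))
        ((Real.exp (-(0:ℝ)) * (-1)) * (ρ1 + ρ2)) 0 := by
      have hn : HasDerivAt (fun x : ℝ => Real.exp (-x)) (Real.exp (-(0:ℝ)) * (-1)) 0 :=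
        (hasDerivAt_neg (0:ℝ)).exp
      simpa using ((hn.sub_const 1).mul_const (ρ1 + ρ2)).const_add 1
    have hmul := ha'.mul hb'
    rw [hφ]
    refine hmul.congr_deriv ?_
    rw [neg_zero, Real.exp_zero]; ring
  have hslope := hasDerivAt_iff_tendsto_slope.mp hderiv
  have hneg : ∀ᶠ x in nhdsWithin 0 {x | x ≠ 0}, slope φ 0 x < 0 :=
    hslope.eventually_lt_const (by linarith)
  have hsub : nhdsWithin (0:ℝ) (Set.Ioi 0) ≤ nhdsWithin 0 {x | x ≠ 0} :=
    nhdsWithin_mono 0 (fun x hx => ne_of_gt hx)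
  obtain ⟨x, hxslope, hx0⟩ :=
    ((hneg.filter_mono hsub).and eventually_mem_nhdsWithin).exists
  have hx0' : (0:ℝ) < x := hx0
  have hφ0 : φ 0 = 1 := by simp [hφ, Real.exp_zero]
  have hφx : φ x < 1 := by
    rw [slope_def_field, hφ0, sub_zero] at hxslope
    rcases div_neg_iff.mp hxslope with ⟨h, h'⟩ | ⟨h, h'⟩
    · linarith
    · linarith
  have hrpos : 0 < φ x := by
    have e1 : 0 < 1 + (Real.exp x - 1) * ρ1 := by nlinarith [Real.exp_pos x]
    have e2 : 0 < 1 + (Real.exp (-x) - 1) * (ρ1 + ρ2) := by nlinarith [Real.exp_pos (-x)]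
    rw [hφ]
    exact mul_pos e1 e2
  set r : ℝ := (1 + (Real.exp x - 1) * ρ1) * (1 + (Real.exp (-x) - 1) * (ρ1 + ρ2)) with hr
  have hrpos' : 0 < r := hrpos
  have hr1 : r < 1 := hφx
  have hCpos : 0 < (1 - r)⁻¹ := inv_pos.mpr (by linarith)
  have hcpos : 0 < -Real.log r := by
    have := Real.log_neg hrpos' hr1
    linarith
  refine ⟨(1 - r)⁻¹, hCpos, -Real.log r, hcpos, fun u v huv => ?_⟩
  set n0 : ℕ := (v - u).toNat with hn0
  have hn0cast : ((v - u : ℤ) : ℝ) = (n0 : ℝ) := by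
    have h : ((n0 : ℤ)) = v - u := Int.toNat_of_nonneg (by omega)
    rw [← h]
    push_cast
    ring
  set E : ℕ → Set Ω := fun m =>
    {ω | ∑ k ∈ Finset.Icc u (v + (m : ℤ)), s k ω ≤ ∑ k ∈ Finset.Icc u (v + (m : ℤ)), a k ω}
    with hE
  have hEmeas : ∀ m, MeasurableSet (E m) := fun m =>
    measurableSet_le (Finset.measurable_sum _ fun k _ => hms k)
      (Finset.measurable_sum _ fun k _ => hma k)
  have hBadmeas : MeasurableSet (⋃ m : ℕ, E m) := MeasurableSet.iUnion hEmeas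
  have hsubset : (⋃ m : ℕ, E m)ᶜ ⊆ {ω | ∃ i : ℤ, u ≤ i ∧ i ≤ v ∧ SecondClassAt a s i ω} := by
    intro ω hω
    simp only [Set.mem_compl_iff, Set.mem_iUnion, not_exists, hE, Set.mem_setOf_eq] at hω
    refine exists_second_class a s hva hvs u v huv ω ?_
    intro j hj
    have hm : v + (((j - v).toNat : ℕ) : ℤ) = j := by omega
    have h := hω (j - v).toNat
    rw [hm] at h
    exact not_le.mp h
  have hchern : ∀ m : ℕ, volume (E m) ≤ ENNReal.ofReal (r ^ (n0 + 1 + m)) := by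
    intro m
    have h := chernoff_step ρ1 ρ2 hρ1pos.le (by linarith) hx0' a s hma hms hva hvs hindep
      hpa hps u (v + (m : ℤ))
    have hcard : (Finset.Icc u (v + (m : ℤ))).card = n0 + 1 + m := by
      rw [Int.card_Icc]
      omega
    rw [hcard] at h
    exact h
  have hsummable : Summable (fun m : ℕ => r ^ (n0 + 1 + m)) := by
    have := (summable_geometric_of_lt_one hrpos'.le hr1).mul_left (r ^ (n0 + 1))
    simpa [pow_add] using this
  have htsum : ∑' m : ℕ, r ^ (n0 + 1 + m) = r ^ (n0 + 1) * (1 - r)⁻¹ := by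
    simp only [pow_add]
    rw [tsum_mul_left, tsum_geometric_of_lt_one hrpos'.le hr1]
  have hreal : r ^ (n0 + 1) * (1 - r)⁻¹
      ≤ (1 - r)⁻¹ * Real.exp (-(-Real.log r) * ((v - u : ℤ) : ℝ)) := by
    have hexp : Real.exp (-(-Real.log r) * ((v - u : ℤ) : ℝ)) = r ^ n0 := by
      rw [hn0cast, neg_neg, mul_comm, Real.exp_nat_mul, Real.exp_log hrpos']
    rw [hexp, pow_succ]
    have hinv : (0:ℝ) ≤ (1 - r)⁻¹ := hCpos.le
    nlinarith [mul_nonneg (mul_nonneg (pow_nonneg hrpos'.le n0) hinv)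
      (by linarith : (0:ℝ) ≤ 1 - r), pow_nonneg hrpos'.le n0]
  have hBad : volume (⋃ m : ℕ, E m)
      ≤ ENNReal.ofReal ((1 - r)⁻¹ * Real.exp (-(-Real.log r) * ((v - u : ℤ) : ℝ))) := by
    calc volume (⋃ m : ℕ, E m) ≤ ∑' m : ℕ, volume (E m) := measure_iUnion_le _
      _ ≤ ∑' m : ℕ, ENNReal.ofReal (r ^ (n0 + 1 + m)) := ENNReal.tsum_le_tsum hchern
      _ = ENNReal.ofReal (∑' m : ℕ, r ^ (n0 + 1 + m)) :=
          (ENNReal.ofReal_tsum_of_nonneg (fun m => pow_nonneg hrpos'.le _) hsummable).symm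
      _ ≤ ENNReal.ofReal ((1 - r)⁻¹ * Real.exp (-(-Real.log r) * ((v - u : ℤ) : ℝ))) := by
          rw [htsum]
          exact ENNReal.ofReal_le_ofReal hreal
  calc 1 - ENNReal.ofReal ((1 - r)⁻¹ * Real.exp (-(-Real.log r) * ((v - u : ℤ) : ℝ)))
      ≤ 1 - volume (⋃ m : ℕ, E m) := tsub_le_tsub_left hBad 1
    _ = volume (⋃ m : ℕ, E m)ᶜ := (prob_compl_eq_one_sub hBadmeas).symm
    _ ≤ volume {ω | ∃ i : ℤ, u ≤ i ∧ i ≤ v ∧ SecondClassAt a s i ω} :=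
        measure_mono hsubset
end
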